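/- arXiv:2209.02286 — 5 statements merged into one kernel-verified Lean document; each statement's English description precedes it below -/
import Mathlib

section
/- Let r > 0 and let f : [0,r] → ℂ be a function. Then f is smooth on [0,r] with all odd-order derivatives vanishing at 0 (i.e., f ∈ C^∞_ev([0,r])) if and only if there exists a smooth function g ∈ C^∞([0,r²]) such that f(ρ) = g(ρ²) for all ρ ∈ [0,r]. -/
open MeasureTheory Metric Set

noncomputable section

/-- `f ∈ C^∞_ev([0,r])`: smooth on `[0,r]` (one-sided derivatives at the endpoints)
with all odd-order derivatives vanishing at `0`. -/
def SmoothEvenOn (r : ℝ) (f : ℝ → ℂ) : Prop :=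
  ContDiffOn ℝ (⊤ : ℕ∞) f (Icc 0 r) ∧
    ∀ n : ℕ, iteratedDerivWithin (2 * n + 1) f (Icc 0 r) 0 = 0

/-- `f ∈ C^∞_ev([0,∞))`. -/
def SmoothEvenIci (f : ℝ → ℂ) : Prop :=
  ContDiffOn ℝ (⊤ : ℕ∞) f (Ici 0) ∧
    ∀ n : ℕ, iteratedDerivWithin (2 * n + 1) f (Ici 0) 0 = 0

/-- `g j = D^j f` on `[0,r]`: each `g (j+1)` is the smooth even extension of
`ρ ↦ ρ⁻¹ (g j)'(ρ)`. -/
def DIter (r : ℝ) (f : ℝ → ℂ) (g : ℕ → ℝ → ℂ) : Prop :=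
  g 0 = f ∧ ∀ j : ℕ, SmoothEvenOn r (g (j + 1)) ∧
    ∀ ρ ∈ Ioc (0 : ℝ) r, g (j + 1) ρ = ρ⁻¹ * derivWithin (g j) (Icc 0 r) ρ

/-- `g j = D^j f` on `[0,∞)`. -/
def DIterIci (f : ℝ → ℂ) (g : ℕ → ℝ → ℂ) : Prop :=
  g 0 = f ∧ ∀ j : ℕ, SmoothEvenIci (g (j + 1)) ∧
    ∀ ρ ∈ Ioi (0 : ℝ), g (j + 1) ρ = ρ⁻¹ * derivWithin (g j) (Ici 0) ρ

/-- Partial derivative `∂ᵢ` within the closed ball of radius `r`. -/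
def pderivB (d : ℕ) (r : ℝ) (i : Fin d) (φ : EuclideanSpace ℝ (Fin d) → ℂ) :
    EuclideanSpace ℝ (Fin d) → ℂ :=
  fun x => fderivWithin ℝ φ (closedBall 0 r) x (EuclideanSpace.single i 1)

/-- `∂_{i₁} ⋯ ∂_{i_n}` within the closed ball, for a list of indices `[i₁,…,i_n]`. -/
def pderivList (d : ℕ) (r : ℝ) (I : List (Fin d)) (φ : EuclideanSpace ℝ (Fin d) → ℂ) :
    EuclideanSpace ℝ (Fin d) → ℂ :=
  I.foldr (pderivB d r) φ

/-- `∂^α` within the closed ball, for a multi-index `α`. -/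
def pderivMulti (d : ℕ) (r : ℝ) (α : Fin d → ℕ) (φ : EuclideanSpace ℝ (Fin d) → ℂ) :
    EuclideanSpace ℝ (Fin d) → ℂ :=
  pderivList d r ((List.finRange d).flatMap fun i => List.replicate (α i) i) φ

/-- Global partial derivative `∂ᵢ` on `ℝ^d`. -/
def pderivG (d : ℕ) (i : Fin d) (φ : EuclideanSpace ℝ (Fin d) → ℂ) :
    EuclideanSpace ℝ (Fin d) → ℂ :=
  fun x => fderiv ℝ φ x (EuclideanSpace.single i 1)

def pderivListG (d : ℕ) (I : List (Fin d)) (φ : EuclideanSpace ℝ (Fin d) → ℂ) :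
    EuclideanSpace ℝ (Fin d) → ℂ :=
  I.foldr (pderivG d) φ

/-- Global `∂^α` on `ℝ^d`, for a multi-index `α`. -/
def pderivMultiG (d : ℕ) (α : Fin d → ℕ) (φ : EuclideanSpace ℝ (Fin d) → ℂ) :
    EuclideanSpace ℝ (Fin d) → ℂ :=
  pderivListG d ((List.finRange d).flatMap fun i => List.replicate (α i) i) φ

/-- The Laplace operator on real-valued functions on `ℝ^d` (used on polynomials). -/
def lap (d : ℕ) (ψ : EuclideanSpace ℝ (Fin d) → ℝ) : EuclideanSpace ℝ (Fin d) → ℝ :=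
  fun x => ∑ i : Fin d,
    fderiv ℝ (fun y => fderiv ℝ ψ y (EuclideanSpace.single i 1)) x (EuclideanSpace.single i 1)

/-- The monomial `x ↦ x^α`. -/
def mono (d : ℕ) (α : Fin d → ℕ) : EuclideanSpace ℝ (Fin d) → ℝ :=
  fun x => ∏ i : Fin d, (x i) ^ (α i)

/-- `p^j_I(x) = (1/(2^j j!)) Δ^j (x_{i₁}⋯x_{i_n})` for a `d`-index `I` of length `n`. -/
def pP (d n : ℕ) (j : ℕ) (I : Fin n → Fin d) : EuclideanSpace ℝ (Fin d) → ℝ :=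
  fun x => (1 / (2 ^ j * (Nat.factorial j)) : ℝ) *
    (lap d)^[j] (fun y => ∏ k : Fin n, y (I k)) x

/-- Multi-indices `α ∈ ℕ₀^d` of length exactly `n`. -/
def multiIndices (d n : ℕ) : Finset (Fin d → ℕ) :=
  (Fintype.piFinset fun _ : Fin d => Finset.range (n + 1)).filter fun α => ∑ i, α i = n

/-- Multi-indices `α ∈ ℕ₀^d` of length at most `k`. -/
def multiIndicesLe (d k : ℕ) : Finset (Fin d → ℕ) :=
  (Fintype.piFinset fun _ : Fin d => Finset.range (k + 1)).filter fun α => ∑ i, α i ≤ k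

open Filter Topology ContDiff intervalIntegral

def clampF (r : ℝ) (f : ℝ → ℂ) (m : ℕ) : ℝ → ℂ :=
  fun u => iteratedDerivWithin m f (Icc 0 r) (max 0 (min u r))

def qfun (r : ℝ) (f : ℝ → ℂ) (k : ℕ) (ρ : ℝ) : ℂ :=
  if ρ = 0 then ((k : ℝ) + 1)⁻¹ • iteratedDerivWithin (k + 2) f (Icc 0 r) 0
  else ((ρ ^ (k + 1))⁻¹ : ℝ) • ∫ u in (0:ℝ)..ρ, (u ^ k : ℝ) • clampF r f (k + 2) u

section H1

variable {r : ℝ} {f : ℝ → ℂ} (hr : 0 < r) (hf : ContDiffOn ℝ (⊤ : ℕ∞) f (Icc 0 r))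

theorem clampF_eq (m : ℕ) {u : ℝ} (hu : u ∈ Icc 0 r) :
    clampF r f m u = iteratedDerivWithin m f (Icc 0 r) u := by
  unfold clampF
  rw [min_eq_left hu.2, max_eq_right hu.1]

include hr hf in
theorem clampF_cont (m : ℕ) : Continuous (clampF r f m) := by
  have hF : ContinuousOn (iteratedDerivWithin m f (Icc 0 r)) (Icc 0 r) :=
    hf.continuousOn_iteratedDerivWithin (by exact_mod_cast le_top) (uniqueDiffOn_Icc hr)
  have hclamp : Continuous fun u : ℝ => max 0 (min u r) :=
    continuous_const.max (continuous_id.min continuous_const)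
  exact hF.comp_continuous hclamp fun u =>
    ⟨le_max_left _ _, max_le hr.le (min_le_right u r)⟩

include hr hf in
theorem clampF_hasDeriv (m : ℕ) {u : ℝ} (hu : u ∈ Ioo 0 r) :
    HasDerivAt (clampF r f m) (clampF r f (m + 1) u) u := by
  have ud : UniqueDiffOn ℝ (Icc (0:ℝ) r) := uniqueDiffOn_Icc hr
  have humem : u ∈ Icc 0 r := ⟨hu.1.le, hu.2.le⟩
  have hmem : Icc 0 r ∈ 𝓝 u := Icc_mem_nhds hu.1 hu.2
  have hdiff : DifferentiableWithinAt ℝ (iteratedDerivWithin m f (Icc 0 r)) (Icc 0 r) u :=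
    hf.differentiableOn_iteratedDerivWithin (by exact_mod_cast (by simp : (m : ℕ∞) < ⊤))
      ud u humem
  have h1 : HasDerivWithinAt (iteratedDerivWithin m f (Icc 0 r))
      (iteratedDerivWithin (m + 1) f (Icc 0 r) u) (Icc 0 r) u := by
    rw [iteratedDerivWithin_succ]
    exact hdiff.hasDerivWithinAt
  have h2 : HasDerivAt (iteratedDerivWithin m f (Icc 0 r))
      (iteratedDerivWithin (m + 1) f (Icc 0 r) u) u := h1.hasDerivAt hmem
  have heq : clampF r f m =ᶠ[𝓝 u] iteratedDerivWithin m f (Icc 0 r) := by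
    filter_upwards [hmem] with v hv
    exact clampF_eq m hv
  rw [clampF_eq (m + 1) humem]
  exact h2.congr_of_eventuallyEq heq

include hr hf in
theorem clampF_intble (k m : ℕ) (a b : ℝ) :
    IntervalIntegrable (fun u => (u ^ k : ℝ) • clampF r f m u) volume a b :=
  ((continuous_pow k).smul (clampF_cont hr hf m)).intervalIntegrable a b

include hr hf in
theorem clampF_IBP (k : ℕ) {ρ : ℝ} (hρ0 : 0 ≤ ρ) (hρr : ρ ≤ r) :
    ∫ u in (0:ℝ)..ρ, (u ^ (k + 1) : ℝ) • clampF r f (k + 3) u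
      = (ρ ^ (k + 1) : ℝ) • clampF r f (k + 2) ρ
        - ((k : ℝ) + 1) • ∫ u in (0:ℝ)..ρ, (u ^ k : ℝ) • clampF r f (k + 2) u := by
  set φ : ℝ → ℂ := fun u => (u ^ (k + 1) : ℝ) • clampF r f (k + 2) u with hφ
  have hd : ∀ x ∈ Ioo (0:ℝ) ρ, HasDerivWithinAt φ
      ((((k:ℝ) + 1) * x ^ k) • clampF r f (k + 2) x
        + (x ^ (k + 1) : ℝ) • clampF r f (k + 3) x) (Ioi x) x := by
    intro x hx
    have hx' : x ∈ Ioo 0 r := ⟨hx.1, lt_of_lt_of_le hx.2 hρr⟩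
    have := (hasDerivAt_pow (k + 1) x).smul (clampF_hasDeriv hr hf (k + 2) hx')
    have h2 : HasDerivAt φ ((x ^ (k+1) : ℝ) • clampF r f (k + 3) x
        + ((↑(k+1) : ℝ) * x ^ (k + 1 - 1)) • clampF r f (k + 2) x) x := this
    have h3 := h2.hasDerivWithinAt (s := Ioi x)
    refine h3.congr_deriv ?_
    push_cast [Nat.add_sub_cancel]
    abel
  have hint : IntervalIntegrable (fun x => (((k:ℝ) + 1) * x ^ k) • clampF r f (k + 2) x
      + (x ^ (k + 1) : ℝ) • clampF r f (k + 3) x) volume 0 ρ := by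
    apply IntervalIntegrable.add
    · exact ((continuous_const.mul (continuous_pow k)).smul
        (clampF_cont hr hf (k + 2))).intervalIntegrable 0 ρ
    · exact clampF_intble hr hf (k + 1) (k + 3) 0 ρ
  have hcontφ : ContinuousOn φ (Icc 0 ρ) :=
    ((continuous_pow (k + 1)).smul (clampF_cont hr hf (k + 2))).continuousOn
  have hFTC := intervalIntegral.integral_eq_sub_of_hasDeriv_right_of_le hρ0 hcontφ hd hint
  have hsplit : ∫ x in (0:ℝ)..ρ, ((((k:ℝ) + 1) * x ^ k) • clampF r f (k + 2) x
      + (x ^ (k + 1) : ℝ) • clampF r f (k + 3) x)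
      = (((k:ℝ) + 1) • ∫ x in (0:ℝ)..ρ, (x ^ k : ℝ) • clampF r f (k + 2) x)
        + ∫ x in (0:ℝ)..ρ, (x ^ (k + 1) : ℝ) • clampF r f (k + 3) x := by
    rw [intervalIntegral.integral_add (by
        exact ((continuous_const.mul (continuous_pow k)).smul
          (clampF_cont hr hf (k + 2))).intervalIntegrable 0 ρ)
      (clampF_intble hr hf (k + 1) (k + 3) 0 ρ)]
    congr 1
    rw [← intervalIntegral.integral_smul]
    congr 1
    ext x
    rw [smul_smul]
  rw [hsplit] at hFTC
  have hφ0 : φ 0 = 0 := by simp [hφ]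
  have hφρ : φ ρ = (ρ ^ (k + 1) : ℝ) • clampF r f (k + 2) ρ := rfl
  rw [hφ0, hφρ, sub_zero] at hFTC
  linear_combination hFTC

include hr hf in
theorem qfun_deriv_pos (k : ℕ) {ρ : ℝ} (hρ : ρ ∈ Ioc 0 r) :
    HasDerivAt (qfun r f k) (qfun r f (k + 1) ρ) ρ := by
  have hρ0 : ρ ≠ 0 := hρ.1.ne'
  have hk1 : ((k : ℝ) + 1) ≠ 0 := by positivity
  have hpow : (ρ ^ (k + 1) : ℝ) ≠ 0 := pow_ne_zero _ hρ0
  set I : ℝ → ℂ := fun x => ∫ u in (0:ℝ)..x, (u ^ k : ℝ) • clampF r f (k + 2) u with hI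
  have hIder : HasDerivAt I ((ρ ^ k : ℝ) • clampF r f (k + 2) ρ) ρ := by
    apply intervalIntegral.integral_hasDerivAt_right (clampF_intble hr hf k (k + 2) 0 ρ)
    · exact ((continuous_pow k).smul (clampF_cont hr hf (k + 2))).stronglyMeasurableAtFilter _ _
    · exact ((continuous_pow k).smul (clampF_cont hr hf (k + 2))).continuousAt
  have hcder : HasDerivAt (fun x : ℝ => (x ^ (k + 1))⁻¹)
      (-(((k : ℝ) + 1) * ρ ^ k) / (ρ ^ (k + 1)) ^ 2) ρ := by
    have := (hasDerivAt_pow (k + 1) ρ).inv hpow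
    refine this.congr_deriv ?_
    push_cast [Nat.add_sub_cancel]
    ring
  have hprod := hcder.smul hIder
  have heq : qfun r f k =ᶠ[𝓝 ρ] fun x => ((x ^ (k + 1))⁻¹ : ℝ) • I x := by
    filter_upwards [eventually_ne_nhds hρ0] with x hx
    simp only [qfun, if_neg hx, hI]
  refine HasDerivAt.congr_of_eventuallyEq ?_ heq
  refine hprod.congr_deriv ?_
  symm
  have hIBP := clampF_IBP hr hf k hρ.1.le hρ.2
  simp only [qfun, if_neg hρ0]
  rw [hIBP, smul_sub, smul_smul, smul_smul, smul_smul]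
  rw [sub_eq_add_neg, ← neg_smul]
  congr 1
  · congr 1
    field_simp
    ring
  · congr 1
    field_simp
    ring

include hr hf in
theorem qfun_tendsto (k : ℕ) :
    Tendsto (qfun r f k) (𝓝[>] 0) (𝓝 (qfun r f k 0)) := by
  set c : ℂ := clampF r f (k + 2) 0 with hc
  have hk1 : ((k : ℝ) + 1) ≠ 0 := by positivity
  have hq0 : qfun r f k 0 = ((k : ℝ) + 1)⁻¹ • c := by
    simp [qfun, hc, clampF_eq (k + 2) (left_mem_Icc.2 hr.le)]
  rw [hq0]
  rw [Metric.tendsto_nhdsWithin_nhds]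
  intro ε hε
  have hcont : ContinuousAt (clampF r f (k + 2)) 0 := (clampF_cont hr hf (k + 2)).continuousAt
  rw [Metric.continuousAt_iff] at hcont
  obtain ⟨δ, hδ, hδ'⟩ := hcont (ε / 2) (by positivity)
  refine ⟨δ, hδ, ?_⟩
  intro ρ hρmem hρδ
  have hρ0 : (0:ℝ) < ρ := hρmem
  have hpow : (ρ ^ (k + 1) : ℝ) ≠ 0 := pow_ne_zero _ hρ0.ne'
  have hρδ' : ρ < δ := by
    rwa [Real.dist_eq, sub_zero, abs_of_pos hρ0] at hρδ
  have key : qfun r f k ρ - ((k : ℝ) + 1)⁻¹ • c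
      = ((ρ ^ (k + 1))⁻¹ : ℝ) • ∫ u in (0:ℝ)..ρ, (u ^ k : ℝ) • (clampF r f (k + 2) u - c) := by
    have hsub : ∫ u in (0:ℝ)..ρ, (u ^ k : ℝ) • (clampF r f (k + 2) u - c)
        = (∫ u in (0:ℝ)..ρ, (u ^ k : ℝ) • clampF r f (k + 2) u)
          - (∫ u in (0:ℝ)..ρ, (u ^ k : ℝ)) • c := by
      rw [← intervalIntegral.integral_smul_const]
      rw [← intervalIntegral.integral_sub (g := fun u : ℝ => (u ^ k : ℝ) • c)
        (clampF_intble hr hf k (k + 2) 0 ρ)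
        (((continuous_pow k).smul continuous_const).intervalIntegrable 0 ρ)]
      congr 1; ext u; rw [smul_sub]
    rw [hsub, smul_sub, integral_pow]
    simp only [qfun, if_neg hρ0.ne']
    congr 1
    rw [zero_pow (by omega : k + 1 ≠ 0), sub_zero]
    field_simp
    rw [smul_smul]
    congr 1
    field_simp
  rw [dist_eq_norm, key]
  have hbound : ‖∫ u in (0:ℝ)..ρ, (u ^ k : ℝ) • (clampF r f (k + 2) u - c)‖
      ≤ ρ ^ k * (ε / 2) * |ρ - 0| := by
    apply intervalIntegral.norm_integral_le_of_norm_le_const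
    intro u hu
    rw [uIoc_of_le hρ0.le] at hu
    have hu0 : 0 < u := hu.1
    have huρ : u ≤ ρ := hu.2
    rw [norm_smul]
    have h1 : ‖(u ^ k : ℝ)‖ ≤ ρ ^ k := by
      rw [Real.norm_eq_abs, abs_of_pos (pow_pos hu0 k)]
      exact pow_le_pow_left₀ hu0.le huρ k
    have h2 : ‖clampF r f (k + 2) u - c‖ ≤ ε / 2 := by
      have hdu : dist u 0 < δ := by
        rw [Real.dist_eq, sub_zero, abs_of_pos hu0]
        exact lt_of_le_of_lt huρ hρδ'
      have := hδ' hdu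
      rw [dist_eq_norm, ← hc] at this
      exact this.le
    exact mul_le_mul h1 h2 (norm_nonneg _) (by positivity)
  rw [norm_smul, Real.norm_eq_abs, abs_of_pos (show (0:ℝ) < (ρ ^ (k + 1))⁻¹ by positivity)]
  calc (ρ ^ (k + 1))⁻¹ * ‖∫ u in (0:ℝ)..ρ, (u ^ k : ℝ) • (clampF r f (k + 2) u - c)‖
      ≤ (ρ ^ (k + 1))⁻¹ * (ρ ^ k * (ε / 2) * |ρ - 0|) :=
        mul_le_mul_of_nonneg_left hbound (by positivity)
    _ = ε / 2 := by
        rw [sub_zero, abs_of_pos hρ0]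
        field_simp
        ring
    _ < ε := by linarith

theorem epL' {R : ℝ} (hR : 0 < R) {q p : ℝ → ℂ}
    (hq : ContinuousWithinAt q (Icc 0 R) 0) (hp : ContinuousWithinAt p (Icc 0 R) 0)
    (hd : ∀ x ∈ Ioo 0 R, HasDerivAt q (p x) x) :
    HasDerivWithinAt q (p 0) (Icc 0 R) 0 := by
  have hIccmem : Icc 0 R ∈ 𝓝[>] (0:ℝ) :=
    mem_of_superset (Ioc_mem_nhdsGT hR) Ioc_subset_Icc_self
  have hle : 𝓝[>] (0:ℝ) ≤ 𝓝[Icc 0 R] (0:ℝ) := nhdsWithin_le_of_mem hIccmem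
  have main : HasDerivWithinAt q (p 0) (Ici 0) 0 := by
    apply hasDerivWithinAt_Ici_of_tendsto_deriv (s := Ioo 0 R)
    · exact fun x hx => (hd x hx).differentiableAt.differentiableWithinAt
    · exact hq.mono Ioo_subset_Icc_self
    · exact Ioo_mem_nhdsGT hR
    · have hpt : Tendsto p (𝓝[>] (0:ℝ)) (𝓝 (p 0)) := hp.mono_left hle
      apply hpt.congr'
      filter_upwards [Ioo_mem_nhdsGT hR] with x hx
      exact ((hd x hx).deriv).symm
  exact main.mono Icc_subset_Ici_self

theorem chainLemma {R : ℝ} (hR : 0 < R) (h : ℕ → ℝ → ℂ)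
    (hcont : ∀ k, ContinuousOn (h k) (Icc 0 R))
    (hderIoc : ∀ k, ∀ x ∈ Ioc 0 R, HasDerivWithinAt (h k) (h (k+1) x) (Icc 0 R) x)
    (hderIoo : ∀ k, ∀ x ∈ Ioo 0 R, HasDerivAt (h k) (h (k+1) x) x) :
    (∀ k, ContDiffOn ℝ (⊤ : ℕ∞) (h k) (Icc 0 R)) ∧
      (∀ k m, ∀ x ∈ Icc 0 R, iteratedDerivWithin m (h k) (Icc 0 R) x = h (k+m) x) := by
  have ud : UniqueDiffOn ℝ (Icc (0:ℝ) R) := uniqueDiffOn_Icc hR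
  have hder : ∀ k, ∀ x ∈ Icc 0 R, HasDerivWithinAt (h k) (h (k+1) x) (Icc 0 R) x := by
    intro k x hx
    rcases eq_or_lt_of_le hx.1 with h0 | h0
    · subst h0
      exact epL' hR (hcont k 0 (left_mem_Icc.2 hR.le)) (hcont (k+1) 0 (left_mem_Icc.2 hR.le))
        (hderIoo k)
    · exact hderIoc k x ⟨h0, hx.2⟩
  have hdw : ∀ k, ∀ x ∈ Icc 0 R, derivWithin (h k) (Icc 0 R) x = h (k+1) x :=
    fun k x hx => (hder k x hx).derivWithin (ud x hx)
  have hsm : ∀ n : ℕ, ∀ k, ContDiffOn ℝ n (h k) (Icc 0 R) := by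
    intro n
    induction n with
    | zero => intro k; simpa [contDiffOn_zero] using hcont k
    | succ n ih =>
      intro k
      rw [show ((n+1 : ℕ) : WithTop ℕ∞) = (n : WithTop ℕ∞) + 1 by norm_cast]
      rw [contDiffOn_succ_iff_derivWithin ud]
      refine ⟨fun x hx => (hder k x hx).differentiableWithinAt, by simp, ?_⟩
      exact (ih (k+1)).congr (fun x hx => hdw k x hx)
  constructor
  · intro k
    exact (contDiffOn_infty.2 fun n => hsm n k : ContDiffOn ℝ ∞ (h k) (Icc 0 R))
  · intro k m
    induction m generalizing k with
    | zero => intro x hx; simp [iteratedDerivWithin_zero]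
    | succ m ih =>
      intro x hx
      rw [iteratedDerivWithin_succ]
      calc derivWithin (iteratedDerivWithin m (h k) (Icc 0 R)) (Icc 0 R) x
          = derivWithin (h (k+m)) (Icc 0 R) x :=
            derivWithin_congr (fun y hy => ih k y hy) (ih k x hx)
        _ = h (k+m+1) x := hdw (k+m) x hx
        _ = h (k+(m+1)) x := by ring_nf

include hr hf in
theorem qfun_cont (k : ℕ) : ContinuousOn (qfun r f k) (Icc 0 r) := by
  intro x hx
  rcases eq_or_lt_of_le hx.1 with h0 | h0
  · subst h0
    rw [← Ioc_insert_left hr.le, continuousWithinAt_insert_self]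
    exact (qfun_tendsto hr hf k).mono_left (nhdsWithin_mono 0 Ioc_subset_Ioi_self)
  · exact (qfun_deriv_pos hr hf k ⟨h0, hx.2⟩).continuousAt.continuousWithinAt

include hr hf in
theorem qfun_chain :
    (∀ k, ContDiffOn ℝ (⊤ : ℕ∞) (qfun r f k) (Icc 0 r)) ∧
      (∀ k m, ∀ x ∈ Icc 0 r, iteratedDerivWithin m (qfun r f k) (Icc 0 r) x
        = qfun r f (k+m) x) := by
  apply chainLemma hr
  · exact fun k => qfun_cont hr hf k
  · exact fun k x hx => (qfun_deriv_pos hr hf k hx).hasDerivWithinAt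
  · exact fun k x hx => qfun_deriv_pos hr hf k ⟨hx.1, hx.2.le⟩

theorem qfun_spec {r : ℝ} {f : ℝ → ℂ} (hr : 0 < r) (hf : SmoothEvenOn r f) :
    SmoothEvenOn r (qfun r f 0) ∧
      ∀ ρ ∈ Ioc (0:ℝ) r, qfun r f 0 ρ = (ρ:ℂ)⁻¹ * derivWithin f (Icc 0 r) ρ := by
  obtain ⟨hf1, hf2⟩ := hf
  have ud : UniqueDiffOn ℝ (Icc (0:ℝ) r) := uniqueDiffOn_Icc hr
  obtain ⟨hsm, hit⟩ := qfun_chain hr hf1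
  refine ⟨⟨hsm 0, ?_⟩, ?_⟩
  · intro n
    rw [hit 0 (2*n+1) 0 (left_mem_Icc.2 hr.le)]
    have : qfun r f (0 + (2*n+1)) 0
        = (((2*n+1 : ℕ) : ℝ) + 1)⁻¹ • iteratedDerivWithin (2*n+1+2) f (Icc 0 r) 0 := by
      simp [qfun]
    rw [this, show 2*n+1+2 = 2*(n+1)+1 by ring, hf2 (n+1), smul_zero]
  · intro ρ hρ
    have hρIcc : ρ ∈ Icc 0 r := ⟨hρ.1.le, hρ.2⟩
    have hFTC : ∫ u in (0:ℝ)..ρ, clampF r f 2 u = clampF r f 1 ρ - clampF r f 1 0 := by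
      apply intervalIntegral.integral_eq_sub_of_hasDeriv_right_of_le hρ.1.le
        ((clampF_cont hr hf1 1).continuousOn)
      · intro x hx
        exact (clampF_hasDeriv hr hf1 1 ⟨hx.1, lt_of_lt_of_le hx.2 hρ.2⟩).hasDerivWithinAt
      · exact ((clampF_cont hr hf1 2)).intervalIntegrable 0 ρ
    have h10 : clampF r f 1 0 = 0 := by
      rw [clampF_eq 1 (left_mem_Icc.2 hr.le)]
      have := hf2 0
      norm_num at this
      simpa using this
    have h1ρ : clampF r f 1 ρ = derivWithin f (Icc 0 r) ρ := by
      rw [clampF_eq 1 hρIcc, iteratedDerivWithin_one]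
    have : qfun r f 0 ρ = (ρ⁻¹ : ℝ) • ∫ u in (0:ℝ)..ρ, clampF r f 2 u := by
      simp only [qfun, if_neg hρ.1.ne', pow_one, zero_add]
      congr 1
      apply intervalIntegral.integral_congr
      intro u hu
      simp
    rw [this, hFTC, h10, sub_zero, h1ρ, Complex.real_smul, Complex.ofReal_inv]

end H1

def Dseq (r : ℝ) (f : ℝ → ℂ) : ℕ → ℝ → ℂ
  | 0 => f
  | k+1 => qfun r (Dseq r f k) 0

theorem Dseq_smooth {r : ℝ} {f : ℝ → ℂ} (hr : 0 < r) (hf : SmoothEvenOn r f) (k : ℕ) :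
    SmoothEvenOn r (Dseq r f k) := by
  induction k with
  | zero => exact hf
  | succ k ih => exact (qfun_spec hr ih).1

theorem Dseq_rel {r : ℝ} {f : ℝ → ℂ} (hr : 0 < r) (hf : SmoothEvenOn r f) (k : ℕ)
    {ρ : ℝ} (hρ : ρ ∈ Ioc (0:ℝ) r) :
    derivWithin (Dseq r f k) (Icc 0 r) ρ = (ρ : ℂ) * Dseq r f (k+1) ρ := by
  have h := (qfun_spec hr (Dseq_smooth hr hf k)).2 ρ hρ
  have hρ0 : (ρ : ℂ) ≠ 0 := by exact_mod_cast hρ.1.ne'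
  rw [show Dseq r f (k+1) = qfun r (Dseq r f k) 0 from rfl, h]
  field_simp

def Gseq (r : ℝ) (f : ℝ → ℂ) (k : ℕ) (t : ℝ) : ℂ :=
  (((2:ℝ) ^ k)⁻¹ : ℝ) • Dseq r f k (Real.sqrt t)

section H2

variable {r : ℝ} {f : ℝ → ℂ} (hr : 0 < r) (hf : SmoothEvenOn r f)

include hr in
theorem sqrt_mapsTo : MapsTo Real.sqrt (Icc 0 (r^2)) (Icc 0 r) := by
  intro t ht
  refine ⟨Real.sqrt_nonneg t, ?_⟩
  calc Real.sqrt t ≤ Real.sqrt (r^2) := Real.sqrt_le_sqrt ht.2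
    _ = r := Real.sqrt_sq hr.le

include hr hf in
theorem Gseq_cont (k : ℕ) : ContinuousOn (Gseq r f k) (Icc 0 (r^2)) := by
  have h1 : ContinuousOn (fun t => Dseq r f k (Real.sqrt t)) (Icc 0 (r^2)) :=
    (Dseq_smooth hr hf k).1.continuousOn.comp Real.continuous_sqrt.continuousOn (sqrt_mapsTo hr)
  exact h1.const_smul (((2:ℝ) ^ k)⁻¹ : ℝ)

include hr hf in
theorem Gseq_val (k : ℕ) {t : ℝ} (ht : 0 < t) (htr : Real.sqrt t ∈ Ioc 0 r) :
    (((2:ℝ) ^ k)⁻¹ : ℝ) • ((1 / (2 * Real.sqrt t)) •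
        derivWithin (Dseq r f k) (Icc 0 r) (Real.sqrt t)) = Gseq r f (k+1) t := by
  rw [Dseq_rel hr hf k htr]
  have hs0 : Real.sqrt t ≠ 0 := htr.1.ne'
  rw [show ((Real.sqrt t : ℝ) : ℂ) * Dseq r f (k+1) (Real.sqrt t)
      = (Real.sqrt t : ℝ) • Dseq r f (k+1) (Real.sqrt t) from (Complex.real_smul).symm]
  rw [smul_smul, smul_smul, Gseq]
  congr 1
  field_simp
  ring

include hr hf in
theorem Gseq_derivIoc (k : ℕ) {t : ℝ} (ht : t ∈ Ioc 0 (r^2)) :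
    HasDerivWithinAt (Gseq r f k) (Gseq r f (k+1) t) (Icc 0 (r^2)) t := by
  have htIcc : t ∈ Icc 0 (r^2) := ⟨ht.1.le, ht.2⟩
  have hρ : Real.sqrt t ∈ Ioc 0 r :=
    ⟨Real.sqrt_pos.2 ht.1, (sqrt_mapsTo hr htIcc).2⟩
  have hρIcc : Real.sqrt t ∈ Icc 0 r := ⟨hρ.1.le, hρ.2⟩
  have hD : HasDerivWithinAt (Dseq r f k)
      (derivWithin (Dseq r f k) (Icc 0 r) (Real.sqrt t)) (Icc 0 r) (Real.sqrt t) :=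
    (((Dseq_smooth hr hf k).1.differentiableOn (by simp))
      (Real.sqrt t) hρIcc).hasDerivWithinAt
  have hsq : HasDerivWithinAt Real.sqrt (1 / (2 * Real.sqrt t)) (Icc 0 (r^2)) t :=
    (Real.hasDerivAt_sqrt ht.1.ne').hasDerivWithinAt
  have hcomp := hD.scomp t hsq (sqrt_mapsTo hr)
  have := hcomp.const_smul (((2:ℝ) ^ k)⁻¹ : ℝ)
  rw [Gseq_val hr hf k ht.1 hρ] at this
  exact this

include hr hf in
theorem Gseq_derivIoo (k : ℕ) {t : ℝ} (ht : t ∈ Ioo 0 (r^2)) :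
    HasDerivAt (Gseq r f k) (Gseq r f (k+1) t) t := by
  have hρ : Real.sqrt t ∈ Ioo 0 r :=
    ⟨Real.sqrt_pos.2 ht.1, by
      calc Real.sqrt t < Real.sqrt (r^2) := Real.sqrt_lt_sqrt ht.1.le ht.2
        _ = r := Real.sqrt_sq hr.le⟩
  have hρIcc : Real.sqrt t ∈ Icc 0 r := ⟨hρ.1.le, hρ.2.le⟩
  have hD : HasDerivAt (Dseq r f k)
      (derivWithin (Dseq r f k) (Icc 0 r) (Real.sqrt t)) (Real.sqrt t) :=
    ((((Dseq_smooth hr hf k).1.differentiableOn (by simp))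
      (Real.sqrt t) hρIcc).hasDerivWithinAt).hasDerivAt (Icc_mem_nhds hρ.1 hρ.2)
  have hcomp := hD.scomp t (Real.hasDerivAt_sqrt ht.1.ne')
  have := hcomp.const_smul (((2:ℝ) ^ k)⁻¹ : ℝ)
  rw [Gseq_val hr hf k ht.1 ⟨hρ.1, hρ.2.le⟩] at this
  exact this

include hr hf in
theorem Gseq_smooth : ContDiffOn ℝ (⊤ : ℕ∞) (Gseq r f 0) (Icc 0 (r^2)) := by
  have hr2 : 0 < r^2 := by positivity
  exact (chainLemma hr2 (Gseq r f) (fun k => Gseq_cont hr hf k)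
    (fun k x hx => Gseq_derivIoc hr hf k hx)
    (fun k x hx => Gseq_derivIoo hr hf k hx)).1 0

end H2

theorem evenRefl {r : ℝ} (hr : 0 < r) {g : ℝ → ℂ}
    (hg : ContDiffOn ℝ (⊤ : ℕ∞) g (Icc 0 (r^2))) {f : ℝ → ℂ}
    (hfg : ∀ ρ ∈ Icc (0:ℝ) r, f ρ = g (ρ^2)) : SmoothEvenOn r f := by
  set F : ℝ → ℂ := fun x => g (x^2) with hFdef
  have hsub : Icc (0:ℝ) r ⊆ Icc (-r) r := Icc_subset_Icc (by linarith) le_rfl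
  have udS : UniqueDiffOn ℝ (Icc (0:ℝ) r) := uniqueDiffOn_Icc hr
  have udB : UniqueDiffOn ℝ (Icc (-r) r) := uniqueDiffOn_Icc (by linarith)
  have hmaps : MapsTo (fun x : ℝ => x^2) (Icc (-r) r) (Icc 0 (r^2)) := by
    intro x hx
    exact ⟨sq_nonneg x, sq_le_sq' hx.1 hx.2⟩
  have hF : ContDiffOn ℝ (⊤ : ℕ∞) F (Icc (-r) r) :=
    hg.comp ((contDiff_id.pow 2).contDiffOn) hmaps
  have hFf : EqOn f F (Icc 0 r) := fun ρ hρ => hfg ρ hρ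
  have hfs : ContDiffOn ℝ (⊤ : ℕ∞) f (Icc 0 r) := ((hF.mono hsub).congr (fun x hx => hFf hx))
  -- transfer of iterated derivatives
  have htrans : ∀ k, ∀ x ∈ Icc (0:ℝ) r,
      iteratedDerivWithin k f (Icc 0 r) x = iteratedDerivWithin k F (Icc (-r) r) x := by
    intro k
    induction k with
    | zero => intro x hx; simp [iteratedDerivWithin_zero, hFf hx]
    | succ k ih =>
      intro x hx
      rw [iteratedDerivWithin_succ, iteratedDerivWithin_succ]
      have hdiffB : DifferentiableWithinAt ℝ (iteratedDerivWithin k F (Icc (-r) r))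
          (Icc (-r) r) x :=
        (hF.differentiableOn_iteratedDerivWithin
          (by exact_mod_cast (by simp : (k : ℕ∞) < ⊤)) udB) x (hsub hx)
      calc derivWithin (iteratedDerivWithin k f (Icc 0 r)) (Icc 0 r) x
          = derivWithin (iteratedDerivWithin k F (Icc (-r) r)) (Icc 0 r) x :=
            derivWithin_congr (fun y hy => ih y hy) (ih x hx)
        _ = derivWithin (iteratedDerivWithin k F (Icc (-r) r)) (Icc (-r) r) x :=
            derivWithin_subset hsub (udS x hx) hdiffB
  -- parity of iterated derivatives of F
  have hpar : ∀ k, ∀ x ∈ Ioo (-r) r,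
      iteratedDerivWithin k F (Icc (-r) r) (-x)
        = ((-1:ℝ)^k) • iteratedDerivWithin k F (Icc (-r) r) x := by
    intro k
    induction k with
    | zero =>
      intro x hx
      simp [iteratedDerivWithin_zero, hFdef, neg_sq]
    | succ k ih =>
      intro x hx
      have hnx : -x ∈ Ioo (-r) r := ⟨by linarith [hx.2], by linarith [hx.1]⟩
      have hmemB : ∀ y ∈ Ioo (-r) r, Icc (-r) r ∈ 𝓝 y := fun y hy => Icc_mem_nhds hy.1 hy.2
      have hdiffAt : ∀ y ∈ Ioo (-r) r, DifferentiableAt ℝ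
          (iteratedDerivWithin k F (Icc (-r) r)) y := by
        intro y hy
        have := (hF.differentiableOn_iteratedDerivWithin
          (by exact_mod_cast (by simp : (k : ℕ∞) < ⊤)) udB) y ⟨hy.1.le, hy.2.le⟩
        exact this.differentiableAt (hmemB y hy)
      have hTd : ∀ y ∈ Ioo (-r) r, iteratedDerivWithin (k+1) F (Icc (-r) r) y
          = deriv (iteratedDerivWithin k F (Icc (-r) r)) y := by
        intro y hy
        rw [iteratedDerivWithin_succ,
          derivWithin_of_mem_nhds (hmemB y hy)]
      rw [hTd x hx, hTd (-x) hnx]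
      have hEq : iteratedDerivWithin k F (Icc (-r) r)
          =ᶠ[𝓝 x] fun y => ((-1:ℝ)^k) • iteratedDerivWithin k F (Icc (-r) r) (-y) := by
        filter_upwards [isOpen_Ioo.mem_nhds hx] with y hy
        rw [ih y hy, smul_smul, ← mul_pow]
        norm_num
      have hder2 : HasDerivAt (fun y => ((-1:ℝ)^k) •
          iteratedDerivWithin k F (Icc (-r) r) (-y))
          (((-1:ℝ)^k) • ((-1:ℝ) • deriv (iteratedDerivWithin k F (Icc (-r) r)) (-x))) x := by
        have hneg : HasDerivAt (fun y : ℝ => -y) (-1 : ℝ) x := (hasDerivAt_id x).neg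
        have := ((hdiffAt (-x) hnx).hasDerivAt).scomp x hneg
        exact this.const_smul ((-1:ℝ)^k)
      rw [hEq.deriv_eq, hder2.deriv, smul_smul, smul_smul]
      have hs : ((-1:ℝ)) ^ (k+1) * (-1)^k * -1 = 1 := by
        rw [mul_assoc, ← pow_succ, ← mul_pow]
        norm_num
      rw [hs, one_smul]
  -- conclude
  refine ⟨hfs, fun n => ?_⟩
  have h0B : (0:ℝ) ∈ Ioo (-r) r := ⟨by linarith, hr⟩
  have := hpar (2*n+1) 0 h0B
  rw [neg_zero] at this
  have hodd : ((-1:ℝ))^(2*n+1) = -1 := Odd.neg_one_pow ⟨n, by ring⟩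
  rw [hodd] at this
  have hT0 : iteratedDerivWithin (2*n+1) F (Icc (-r) r) 0 = 0 := by
    have h2 : iteratedDerivWithin (2*n+1) F (Icc (-r) r) 0
        = - iteratedDerivWithin (2*n+1) F (Icc (-r) r) 0 := by
      simpa using this
    linear_combination h2 / 2
  rw [htrans (2*n+1) 0 (left_mem_Icc.2 hr.le), hT0]

/-- `f ∈ C^∞_ev([0,r])` iff `f(ρ) = g(ρ²)` for some `g ∈ C^∞([0,r²])`. -/
theorem smoothEven_iff_exists_smooth_sq (r : ℝ) (hr : 0 < r) (f : ℝ → ℂ) :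
    SmoothEvenOn r f ↔
      ∃ g : ℝ → ℂ, ContDiffOn ℝ (⊤ : ℕ∞) g (Icc 0 (r ^ 2)) ∧
        ∀ ρ ∈ Icc (0 : ℝ) r, f ρ = g (ρ ^ 2) := by
  constructor
  · intro hf
    refine ⟨Gseq r f 0, Gseq_smooth hr hf, ?_⟩
    intro ρ hρ
    simp [Gseq, Real.sqrt_sq hρ.1, show Dseq r f 0 = f from rfl]
  · rintro ⟨g, hg, hfg⟩
    exact evenRefl hr hg hfg
end
end

section
/- Let r > 0, let f ∈ C^∞_ev([0,r]), and define g on (0,r²] by g(ρ) = f(√ρ). Then for every integer n ≥ 1 and every ρ ∈ (0,r], the n-th derivative of g satisfies g^(n)(ρ²) = (1 / (2^(2n−1) (n−1)!)) ∫₀¹ (1−t²)^(n−1) f^(2n)(tρ) dt. -/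
open MeasureTheory Metric Set

noncomputable section

open intervalIntegral

namespace DSA

variable (r : ℝ) (f : ℝ → ℂ)

/-- clamp into `[0,r]` -/
def cl (x : ℝ) : ℝ := min (max x 0) r

/-- continuous globalization of the iterated derivatives of `f` -/
def Fc (k : ℕ) (x : ℝ) : ℂ := iteratedDerivWithin k f (Icc 0 r) (cl r x)

variable {r f}

lemma cl_mem (hr : 0 ≤ r) (x : ℝ) : cl r x ∈ Icc 0 r := by
  constructor
  · exact le_min (le_max_right _ _) hr
  · exact min_le_right _ _

lemma cl_eq {x : ℝ} (hx : x ∈ Icc 0 r) : cl r x = x := by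
  simp [cl, max_eq_left hx.1, min_eq_left hx.2]

lemma continuous_cl : Continuous (cl r) := by
  unfold cl; fun_prop

lemma Fc_eq {x : ℝ} (hx : x ∈ Icc 0 r) (k : ℕ) :
    Fc r f k x = iteratedDerivWithin k f (Icc 0 r) x := by
  rw [Fc, cl_eq hx]

lemma continuous_Fc (hr : 0 < r) (hf : SmoothEvenOn r f) (k : ℕ) : Continuous (Fc r f k) := by
  have h1 : ContinuousOn (iteratedDerivWithin k f (Icc 0 r)) (Icc 0 r) :=
    hf.1.continuousOn_iteratedDerivWithin (by exact_mod_cast le_top) (uniqueDiffOn_Icc hr)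
  exact h1.comp_continuous continuous_cl (fun x => cl_mem hr.le x)

lemma Fc_odd_zero (hr : 0 < r) (hf : SmoothEvenOn r f) (k : ℕ) : Fc r f (2 * k + 1) 0 = 0 := by
  rw [Fc_eq ⟨le_refl _, hr.le⟩]; exact hf.2 k

lemma hasDerivAt_Fc (hr : 0 < r) (hf : SmoothEvenOn r f) (k : ℕ) {x : ℝ} (hx : x ∈ Ioo 0 r) :
    HasDerivAt (Fc r f k) (Fc r f (k + 1) x) x := by
  have hxI : x ∈ Icc 0 r := ⟨hx.1.le, hx.2.le⟩
  have hnhds : Icc (0:ℝ) r ∈ nhds x := Icc_mem_nhds hx.1 hx.2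
  have hd : DifferentiableWithinAt ℝ (iteratedDerivWithin k f (Icc 0 r)) (Icc 0 r) x :=
    hf.1.differentiableOn_iteratedDerivWithin (by exact_mod_cast lt_top_iff_ne_top.2 (by simp))
      (uniqueDiffOn_Icc hr) x hxI
  have h1 : HasDerivAt (iteratedDerivWithin k f (Icc 0 r))
      (iteratedDerivWithin (k+1) f (Icc 0 r) x) x := by
    have := hd.hasDerivWithinAt
    rw [iteratedDerivWithin_succ]
    exact this.hasDerivAt hnhds
  have heq : Fc r f k =ᶠ[nhds x] iteratedDerivWithin k f (Icc 0 r) := by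
    filter_upwards [hnhds] with y hy
    exact Fc_eq hy k
  rw [Fc_eq hxI]
  exact h1.congr_of_eventuallyEq heq


lemma ftc (h : ℝ → ℂ) (hh : Continuous h) (x : ℝ) :
    HasDerivAt (fun u => ∫ s in (0:ℝ)..u, h s) (h x) x :=
  intervalIntegral.integral_hasDerivAt_right (hh.intervalIntegrable _ _)
    (hh.stronglyMeasurableAtFilter _ _) hh.continuousAt

/-- Integration by parts against `Fc`. -/
lemma ibp (hr : 0 < r) (hf : SmoothEvenOn r f) (k : ℕ) {ρ : ℝ} (hρ : ρ ∈ Ioc 0 r)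
    (u u' : ℝ → ℂ) (hu : ∀ x ∈ Ioo 0 ρ, HasDerivAt u (u' x) x)
    (hucont : Continuous u) (hu'cont : Continuous u') :
    ∫ s in (0:ℝ)..ρ, u s * Fc r f (k + 1) s =
      u ρ * Fc r f k ρ - u 0 * Fc r f k 0 - ∫ s in (0:ℝ)..ρ, u' s * Fc r f k s := by
  have hFk := continuous_Fc hr hf k
  have hFk1 := continuous_Fc hr hf (k + 1)
  have key : ∫ s in (0:ℝ)..ρ, (u' s * Fc r f k s + u s * Fc r f (k + 1) s) =
      u ρ * Fc r f k ρ - u 0 * Fc r f k 0 := by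
    apply intervalIntegral.integral_eq_sub_of_hasDeriv_right_of_le hρ.1.le
    · exact ((hucont.mul hFk).continuousOn)
    · intro x hx
      have hx' : x ∈ Ioo 0 r := ⟨hx.1, lt_of_lt_of_le hx.2 hρ.2⟩
      exact (((hu x hx).mul (hasDerivAt_Fc hr hf k hx')).hasDerivWithinAt)
    · exact ((hu'cont.mul hFk).add (hucont.mul hFk1)).intervalIntegrable _ _
  rw [intervalIntegral.integral_add (f := fun s => u' s * Fc r f k s) (g := fun s => u s * Fc r f (k + 1) s) ((hu'cont.mul hFk).intervalIntegrable _ _)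
    ((hucont.mul hFk1).intervalIntegrable _ _)] at key
  linear_combination key

lemma integral_Fc_succ (hr : 0 < r) (hf : SmoothEvenOn r f) (k : ℕ) {ρ : ℝ} (hρ : ρ ∈ Ioc 0 r) :
    ∫ s in (0:ℝ)..ρ, Fc r f (k + 1) s = Fc r f k ρ - Fc r f k 0 := by
  have := ibp hr hf k hρ (fun _ => 1) (fun _ => 0) (fun x _ => hasDerivAt_const x 1)
    continuous_const continuous_const
  simpa using this


variable (r f)

def Aint (m : ℕ) (ρ : ℝ) : ℂ :=
  ∫ s in (0:ℝ)..ρ, (((ρ ^ 2 - s ^ 2) ^ m : ℝ) : ℂ) * Fc r f (2 * m + 2) s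

def Bint (m : ℕ) (ρ : ℝ) : ℂ :=
  ∫ s in (0:ℝ)..ρ, (((ρ ^ 2 - s ^ 2) ^ (m - 1) : ℝ) : ℂ) * Fc r f (2 * m + 2) s

def Iint (K w : ℕ) (ρ : ℝ) : ℂ :=
  ∫ s in (0:ℝ)..ρ, ((s ^ w : ℝ) : ℂ) * Fc r f K s

variable {r f}

lemma pow_expand (hr : 0 < r) (hf : SmoothEvenOn r f) (j K : ℕ) (ρ : ℝ) :
    (∫ s in (0:ℝ)..ρ, (((ρ ^ 2 - s ^ 2) ^ j : ℝ) : ℂ) * Fc r f K s) =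
      ∑ k ∈ Finset.range (j + 1),
        ((-1 : ℂ) ^ (k + j) * (ρ : ℂ) ^ (2 * k) * (j.choose k)) * Iint r f K (2 * (j - k)) ρ := by
  have hFK := continuous_Fc hr hf K
  have hpt : ∀ s : ℝ, (((ρ ^ 2 - s ^ 2) ^ j : ℝ) : ℂ) * Fc r f K s =
      ∑ k ∈ Finset.range (j + 1),
        ((-1 : ℂ) ^ (k + j) * (ρ : ℂ) ^ (2 * k) * (j.choose k)) * (((s ^ (2 * (j - k)) : ℝ) : ℂ) * Fc r f K s) := by
    intro s
    rw [sub_pow]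
    push_cast
    rw [Finset.sum_mul]
    apply Finset.sum_congr rfl
    intro k _
    rw [pow_mul, pow_mul]
    ring
  simp only [hpt]
  rw [intervalIntegral.integral_finset_sum]
  · apply Finset.sum_congr rfl
    intro k _
    rw [Iint, ← intervalIntegral.integral_const_mul]
  · intro k _
    apply Continuous.intervalIntegrable
    fun_prop


lemma sign_sum (m : ℕ) : ∑ k ∈ Finset.range (m + 1), (-1 : ℂ) ^ (k + m) * (m.choose k) = 0 ^ m := by
  have h0 := sub_pow (1 : ℂ) 1 m
  simp only [sub_self, one_pow, mul_one, one_mul] at h0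
  rw [← h0]

lemma hasDerivAt_A (hr : 0 < r) (hf : SmoothEvenOn r f) (m : ℕ) (ρ : ℝ) :
    HasDerivAt (Aint r f m)
      (2 * (m : ℂ) * (ρ : ℂ) * Bint r f m ρ +
        (0 : ℂ) ^ m * (ρ : ℂ) ^ (2 * m) * Fc r f (2 * m + 2) ρ) ρ := by
  classical
  have hFK : Continuous (Fc r f (2 * m + 2)) := continuous_Fc hr hf (2 * m + 2)
  have hfun : Aint r f m = fun x : ℝ => ∑ k ∈ Finset.range (m + 1),
      ((-1 : ℂ) ^ (k + m) * (x : ℂ) ^ (2 * k) * (m.choose k)) * Iint r f (2 * m + 2) (2 * (m - k)) x :=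
    funext fun x => pow_expand hr hf m (2 * m + 2) x
  rw [hfun]
  have hterm : ∀ k, HasDerivAt
      (fun x : ℝ => ((-1 : ℂ) ^ (k + m) * (x : ℂ) ^ (2 * k) * (m.choose k)) *
        Iint r f (2 * m + 2) (2 * (m - k)) x)
      (((-1 : ℂ) ^ (k + m) * ((((2 * k) * ρ ^ (2 * k - 1) : ℝ)) : ℂ) * (m.choose k)) *
          Iint r f (2 * m + 2) (2 * (m - k)) ρ +
        ((-1 : ℂ) ^ (k + m) * (ρ : ℂ) ^ (2 * k) * (m.choose k)) *
          (((ρ ^ (2 * (m - k)) : ℝ) : ℂ) * Fc r f (2 * m + 2) ρ)) ρ := by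
    intro k
    have hI : HasDerivAt (fun x => Iint r f (2 * m + 2) (2 * (m - k)) x)
        (((ρ ^ (2 * (m - k)) : ℝ) : ℂ) * Fc r f (2 * m + 2) ρ) ρ := by
      have hc : Continuous (fun s : ℝ => ((s ^ (2 * (m - k)) : ℝ) : ℂ) * Fc r f (2 * m + 2) s) := by
        fun_prop
      exact ftc _ hc ρ
    have hp : HasDerivAt (fun x : ℝ => ((x ^ (2 * k) : ℝ) : ℂ))
        ((((2 * k) * ρ ^ (2 * k - 1) : ℝ)) : ℂ) ρ := by
      exact_mod_cast (hasDerivAt_pow (2 * k) ρ).ofReal_comp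
    simp only [Complex.ofReal_pow] at hp
    exact ((hp.const_mul ((-1 : ℂ) ^ (k + m))).mul_const ((m.choose k : ℂ))).mul hI
  have hsum := HasDerivAt.fun_sum (u := Finset.range (m + 1)) (fun k _ => hterm k)
  refine hsum.congr_deriv ?_
  rw [Finset.sum_add_distrib]
  have hb : ∑ k ∈ Finset.range (m + 1),
      ((-1 : ℂ) ^ (k + m) * (ρ : ℂ) ^ (2 * k) * (m.choose k)) *
        (((ρ ^ (2 * (m - k)) : ℝ) : ℂ) * Fc r f (2 * m + 2) ρ) =
      (0 : ℂ) ^ m * (ρ : ℂ) ^ (2 * m) * Fc r f (2 * m + 2) ρ := by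
    rw [← sign_sum m, Finset.sum_mul, Finset.sum_mul]
    apply Finset.sum_congr rfl
    intro k hk
    have hkm : 2 * k + 2 * (m - k) = 2 * m := by
      have := Finset.mem_range_succ_iff.mp hk; omega
    push_cast
    rw [show ((ρ:ℂ) ^ (2*m)) = (ρ:ℂ) ^ (2*k) * (ρ:ℂ) ^ (2*(m-k)) by rw [← pow_add, hkm]]
    ring
  have ha : ∑ k ∈ Finset.range (m + 1),
      ((-1 : ℂ) ^ (k + m) * ((((2 * k) * ρ ^ (2 * k - 1) : ℝ)) : ℂ) * (m.choose k)) *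
        Iint r f (2 * m + 2) (2 * (m - k)) ρ =
      2 * (m : ℂ) * (ρ : ℂ) * Bint r f m ρ := by
    have hBexp : Bint r f m ρ = ∑ k ∈ Finset.range ((m - 1) + 1),
        ((-1 : ℂ) ^ (k + (m - 1)) * (ρ : ℂ) ^ (2 * k) * ((m - 1).choose k)) *
          Iint r f (2 * m + 2) (2 * ((m - 1) - k)) ρ := pow_expand hr hf (m - 1) (2 * m + 2) ρ
    rcases Nat.eq_zero_or_pos m with hm | hm
    · subst hm; simp
    · obtain ⟨j, rfl⟩ : ∃ j, m = j + 1 := ⟨m - 1, by omega⟩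
      rw [Finset.sum_range_succ']
      simp only [Nat.cast_zero, mul_zero, zero_mul, Complex.ofReal_zero, add_zero]
      rw [hBexp]
      simp only [Nat.add_sub_cancel]
      rw [Finset.mul_sum]
      apply Finset.sum_congr rfl
      intro i _
      have hidx : (j + 1) - (i + 1) = j - i := by omega
      have hexp : 2 * (i + 1) - 1 = 2 * i + 1 := by omega
      have hsign : (-1 : ℂ) ^ (i + 1 + (j + 1)) = (-1 : ℂ) ^ (i + j) := by
        rw [show i + 1 + (j + 1) = (i + j) + 2 by omega, pow_add]; simp
      have hchoose : (((j + 1).choose (i + 1) : ℕ) : ℂ) * ((i : ℂ) + 1) =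
          ((j : ℂ) + 1) * ((j.choose i : ℕ) : ℂ) := by
        have := Nat.add_one_mul_choose_eq j i
        have h2 : (j + 1) * (j.choose i) = (j + 1).choose (i + 1) * (i + 1) := this
        exact_mod_cast (congrArg (Nat.cast (R := ℂ)) h2).symm
      rw [hidx, hexp, hsign]
      push_cast
      linear_combination ((-1 : ℂ) ^ (i + j) * (ρ : ℂ) ^ (2 * i + 1) *
        Iint r f (2 * (j + 1) + 2) (2 * (j - i)) ρ * 2) * hchoose
  rw [ha, hb]


lemma step1 (hr : 0 < r) (hf : SmoothEvenOn r f) (m : ℕ) {ρ : ℝ} (hρ : ρ ∈ Ioc 0 r) :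
    Aint r f (m + 1) ρ =
      (2 * ((m : ℂ) + 1)) *
        ∫ s in (0:ℝ)..ρ, ((s * (ρ ^ 2 - s ^ 2) ^ m : ℝ) : ℂ) * Fc r f (2 * m + 3) s := by
  have hder : ∀ x ∈ Ioo (0:ℝ) ρ, HasDerivAt (fun s : ℝ => (((ρ ^ 2 - s ^ 2) ^ (m + 1) : ℝ) : ℂ))
      (((-(2 * (m + 1)) * (x * (ρ ^ 2 - x ^ 2) ^ m) : ℝ)) : ℂ) x := by
    intro x _
    have h1 : HasDerivAt (fun s : ℝ => ρ ^ 2 - s ^ 2) (-(2 * x)) x := by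
      simpa using ((hasDerivAt_pow 2 x).const_sub (ρ ^ 2))
    have h2 := (h1.fun_pow (m + 1)).ofReal_comp
    convert h2 using 1
    push_cast
    ring_nf
  have hibp := ibp hr hf (2 * m + 3) hρ
    (fun s : ℝ => (((ρ ^ 2 - s ^ 2) ^ (m + 1) : ℝ) : ℂ))
    (fun x : ℝ => ((-(2 * (m + 1)) * (x * (ρ ^ 2 - x ^ 2) ^ m) : ℝ) : ℂ))
    hder (by fun_prop) (by fun_prop)
  have hb1 : ((((ρ ^ 2 - ρ ^ 2) ^ (m + 1) : ℝ)) : ℂ) = 0 := by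
    simp
  have hb2 : Fc r f (2 * m + 3) 0 = 0 := by
    have := Fc_odd_zero hr hf (m + 1)
    simpa [show 2 * (m + 1) + 1 = 2 * m + 3 by omega] using this
  have h2m4 : 2 * (m + 1) + 2 = 2 * m + 3 + 1 := by omega
  have hInt : ∫ s in (0:ℝ)..ρ, ((-(2 * (m + 1)) * (s * (ρ ^ 2 - s ^ 2) ^ m) : ℝ) : ℂ) *
      Fc r f (2 * m + 3) s =
      (-(2 * ((m:ℂ) + 1))) * ∫ s in (0:ℝ)..ρ, ((s * (ρ ^ 2 - s ^ 2) ^ m : ℝ) : ℂ) *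
        Fc r f (2 * m + 3) s := by
    rw [← intervalIntegral.integral_const_mul]
    apply intervalIntegral.integral_congr
    intro s _
    push_cast
    ring
  simp only [hb1, hb2, zero_mul, mul_zero, sub_zero, zero_sub] at hibp
  rw [hInt] at hibp
  unfold Aint
  rw [h2m4, hibp]
  ring

lemma sq_integral_eq (hr : 0 < r) (hf : SmoothEvenOn r f) (m : ℕ) {ρ : ℝ} (hρ : ρ ∈ Ioc 0 r) :
    (2 * (m : ℂ)) * ∫ s in (0:ℝ)..ρ, ((s ^ 2 * (ρ ^ 2 - s ^ 2) ^ (m - 1) : ℝ) : ℂ) *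
        Fc r f (2 * m + 2) s =
      (2 * (m : ℂ)) * ((ρ : ℂ) ^ 2 * Bint r f m ρ - Aint r f m ρ) := by
  rcases Nat.eq_zero_or_pos m with hm | hm
  · subst hm; simp
  · obtain ⟨j, rfl⟩ : ∃ j, m = j + 1 := ⟨m - 1, by omega⟩
    congr 1
    have hsub : ∀ s : ℝ, ((s ^ 2 * (ρ ^ 2 - s ^ 2) ^ (j + 1 - 1) : ℝ) : ℂ) * Fc r f (2 * (j+1) + 2) s =
        (ρ:ℂ) ^ 2 * ((((ρ ^ 2 - s ^ 2) ^ (j + 1 - 1) : ℝ) : ℂ) * Fc r f (2 * (j+1) + 2) s) -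
          (((ρ ^ 2 - s ^ 2) ^ (j + 1) : ℝ) : ℂ) * Fc r f (2 * (j+1) + 2) s := by
      intro s
      simp only [Nat.add_sub_cancel]
      push_cast
      ring
  -- rewrite integrand and split
    rw [intervalIntegral.integral_congr (g := fun s : ℝ =>
        (ρ:ℂ) ^ 2 * ((((ρ ^ 2 - s ^ 2) ^ (j + 1 - 1) : ℝ) : ℂ) * Fc r f (2 * (j+1) + 2) s) -
          (((ρ ^ 2 - s ^ 2) ^ (j + 1) : ℝ) : ℂ) * Fc r f (2 * (j+1) + 2) s) (fun s _ => hsub s)]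
    rw [intervalIntegral.integral_sub]
    · rw [intervalIntegral.integral_const_mul]
      rfl
    · apply Continuous.intervalIntegrable
      have := continuous_Fc hr hf (2 * (j+1) + 2)
      fun_prop
    · apply Continuous.intervalIntegrable
      have := continuous_Fc hr hf (2 * (j+1) + 2)
      fun_prop

lemma step2 (hr : 0 < r) (hf : SmoothEvenOn r f) (m : ℕ) {ρ : ℝ} (hρ : ρ ∈ Ioc 0 r) :
    ∫ s in (0:ℝ)..ρ, ((s * (ρ ^ 2 - s ^ 2) ^ m : ℝ) : ℂ) * Fc r f (2 * m + 3) s =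
      (ρ : ℂ) * (0 : ℂ) ^ m * Fc r f (2 * m + 2) ρ - (2 * (m : ℂ) + 1) * Aint r f m ρ +
        2 * (m : ℂ) * (ρ : ℂ) ^ 2 * Bint r f m ρ := by
  have hder : ∀ x ∈ Ioo (0:ℝ) ρ, HasDerivAt (fun s : ℝ => ((s * (ρ ^ 2 - s ^ 2) ^ m : ℝ) : ℂ))
      ((((ρ ^ 2 - x ^ 2) ^ m - 2 * m * (x ^ 2 * (ρ ^ 2 - x ^ 2) ^ (m - 1)) : ℝ)) : ℂ) x := by
    intro x _
    have h1 : HasDerivAt (fun s : ℝ => ρ ^ 2 - s ^ 2) (-(2 * x)) x := by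
      simpa using ((hasDerivAt_pow 2 x).const_sub (ρ ^ 2))
    have h2 := ((hasDerivAt_id x).fun_mul (h1.fun_pow m)).ofReal_comp
    simp only [id_eq] at h2
    convert h2 using 1
    push_cast
    ring
  have hibp := ibp hr hf (2 * m + 2) hρ
    (fun s : ℝ => ((s * (ρ ^ 2 - s ^ 2) ^ m : ℝ) : ℂ))
    (fun x : ℝ => (((ρ ^ 2 - x ^ 2) ^ m - 2 * m * (x ^ 2 * (ρ ^ 2 - x ^ 2) ^ (m - 1)) : ℝ) : ℂ))
    hder (by fun_prop) (by fun_prop)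
  have hzero : ((0 * (ρ ^ 2 - 0 ^ 2) ^ m : ℝ) : ℂ) = 0 := by push_cast; ring
  have hbρ : ((ρ * (ρ ^ 2 - ρ ^ 2) ^ m : ℝ) : ℂ) = (ρ : ℂ) * (0 : ℂ) ^ m := by
    push_cast; ring_nf
  have hsplit : ∫ s in (0:ℝ)..ρ, (((ρ ^ 2 - s ^ 2) ^ m - 2 * m *
      (s ^ 2 * (ρ ^ 2 - s ^ 2) ^ (m - 1)) : ℝ) : ℂ) * Fc r f (2 * m + 2) s =
      Aint r f m ρ - (2 * (m:ℂ)) * ∫ s in (0:ℝ)..ρ,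
        ((s ^ 2 * (ρ ^ 2 - s ^ 2) ^ (m - 1) : ℝ) : ℂ) * Fc r f (2 * m + 2) s := by
    have hFc := continuous_Fc hr hf (2 * m + 2)
    unfold Aint
    rw [← intervalIntegral.integral_const_mul, ← intervalIntegral.integral_sub]
    · apply intervalIntegral.integral_congr
      intro s _
      push_cast
      ring
    · apply Continuous.intervalIntegrable; fun_prop
    · apply Continuous.intervalIntegrable; fun_prop
  simp only [hzero, hbρ, zero_mul, Complex.ofReal_zero, sub_zero] at hibp
  rw [hsplit] at hibp
  have hsq := sq_integral_eq hr hf m hρ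
  rw [show (2 * m + 3) = (2 * m + 2) + 1 by omega]
  linear_combination hibp + hsq

lemma A_succ (hr : 0 < r) (hf : SmoothEvenOn r f) (m : ℕ) {ρ : ℝ} (hρ : ρ ∈ Ioc 0 r) :
    Aint r f (m + 1) ρ =
      (2 * ((m : ℂ) + 1)) * ((ρ : ℂ) * (0 : ℂ) ^ m * Fc r f (2 * m + 2) ρ -
        (2 * (m : ℂ) + 1) * Aint r f m ρ + 2 * (m : ℂ) * (ρ : ℂ) ^ 2 * Bint r f m ρ) := by
  rw [step1 hr hf m hρ, step2 hr hf m hρ]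


lemma cov (hr : 0 < r) (hf : SmoothEvenOn r f) (m : ℕ) {ρ : ℝ} (hρ : ρ ∈ Ioc 0 r) :
    ∫ t in (0:ℝ)..1, (((1 - t ^ 2) ^ m : ℝ) : ℂ) * Fc r f (2 * m + 2) (t * ρ) =
      ((ρ : ℂ) ^ (2 * m + 1))⁻¹ * Aint r f m ρ := by
  have hsm := intervalIntegral.smul_integral_comp_mul_right (a := (0:ℝ)) (b := 1)
    (fun s => (((ρ ^ 2 - s ^ 2) ^ m : ℝ) : ℂ) * Fc r f (2 * m + 2) s) ρ
  simp only [zero_mul, one_mul] at hsm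
  have hpt : ∀ t ∈ uIcc (0:ℝ) 1, (((ρ ^ 2 - (t * ρ) ^ 2) ^ m : ℝ) : ℂ) * Fc r f (2 * m + 2) (t * ρ)
      = ((ρ : ℂ) ^ (2 * m)) * ((((1 - t ^ 2) ^ m : ℝ) : ℂ) * Fc r f (2 * m + 2) (t * ρ)) := by
    intro t _
    have h1 : (ρ ^ 2 - (t * ρ) ^ 2) ^ m = ρ ^ (2 * m) * (1 - t ^ 2) ^ m := by
      rw [show ρ ^ 2 - (t * ρ) ^ 2 = ρ ^ 2 * (1 - t ^ 2) from by ring, mul_pow, ← pow_mul]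
    rw [h1]; push_cast; ring
  rw [intervalIntegral.integral_congr hpt, intervalIntegral.integral_const_mul,
    Complex.real_smul] at hsm
  have hρC : (ρ : ℂ) ≠ 0 := Complex.ofReal_ne_zero.mpr (ne_of_gt hρ.1)
  have hA : Aint r f m ρ = (ρ : ℂ) * ((ρ : ℂ) ^ (2 * m) *
      ∫ t in (0:ℝ)..1, (((1 - t ^ 2) ^ m : ℝ) : ℂ) * Fc r f (2 * m + 2) (t * ρ)) := hsm.symm
  rw [hA, ← mul_assoc (ρ:ℂ), ← pow_succ', inv_mul_cancel_left₀ (pow_ne_zero _ hρC)]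


lemma maps_sqrt (hr : 0 < r) : MapsTo Real.sqrt (Ioc 0 (r ^ 2)) (Ioc 0 r) := by
  intro σ hσ
  refine ⟨Real.sqrt_pos.2 hσ.1, ?_⟩
  calc Real.sqrt σ ≤ Real.sqrt (r ^ 2) := Real.sqrt_le_sqrt hσ.2
    _ = r := Real.sqrt_sq hr.le

lemma maps_sqrt' (hr : 0 < r) : MapsTo Real.sqrt (Ioc 0 (r ^ 2)) (Icc 0 r) :=
  fun x hx => Ioc_subset_Icc_self (maps_sqrt hr hx)

lemma hasDerivWithinAt_sqrt_sq (hr : 0 < r) {ρ : ℝ} (hρ : ρ ∈ Ioc 0 r) :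
    HasDerivWithinAt Real.sqrt (1 / (2 * ρ)) (Ioc 0 (r ^ 2)) (ρ ^ 2) := by
  have h := Real.hasDerivAt_sqrt (x := ρ ^ 2) (by have := hρ.1; positivity)
  rw [Real.sqrt_sq hρ.1.le] at h
  exact h.hasDerivWithinAt

lemma sq_mem {ρ : ℝ} (hρ : ρ ∈ Ioc 0 r) : ρ ^ 2 ∈ Ioc (0:ℝ) (r ^ 2) :=
  ⟨pow_pos hρ.1 2, pow_le_pow_left₀ hρ.1.le hρ.2 2⟩

lemma main (hr : 0 < r) (hf : SmoothEvenOn r f) (m : ℕ) :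
    ∀ ρ ∈ Ioc (0:ℝ) r,
      iteratedDerivWithin (m + 1) (fun σ => f (Real.sqrt σ)) (Ioc 0 (r ^ 2)) (ρ ^ 2) =
        ((2 : ℂ) ^ (2 * m + 1) * (m.factorial : ℂ))⁻¹ * ((ρ : ℂ) ^ (2 * m + 1))⁻¹ *
          Aint r f m ρ := by
  induction m with
  | zero =>
    intro ρ hρ
    have hmem : ρ ^ 2 ∈ Ioc (0:ℝ) (r ^ 2) := sq_mem hρ
    have hu := uniqueDiffOn_Ioc (0:ℝ) (r ^ 2)
    have hρC : (ρ : ℂ) ≠ 0 := Complex.ofReal_ne_zero.mpr hρ.1.ne'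
    rw [iteratedDerivWithin_one]
    have hρI : ρ ∈ Icc (0:ℝ) r := ⟨hρ.1.le, hρ.2⟩
    have hf1 : HasDerivWithinAt f (Fc r f 1 ρ) (Icc 0 r) ρ := by
      have hd : DifferentiableWithinAt ℝ f (Icc 0 r) ρ :=
        (hf.1.differentiableOn (by simp)) ρ hρI
      have h2 := hd.hasDerivWithinAt
      rwa [Fc_eq hρI, iteratedDerivWithin_one]
    have hcomp : HasDerivWithinAt (fun σ => f (Real.sqrt σ)) ((1 / (2 * ρ)) • Fc r f 1 ρ)
        (Ioc 0 (r ^ 2)) (ρ ^ 2) :=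
      hf1.scomp_of_eq (ρ ^ 2) (hasDerivWithinAt_sqrt_sq hr hρ) (maps_sqrt' hr)
        (Real.sqrt_sq hρ.1.le).symm
    rw [hcomp.derivWithin (hu _ hmem)]
    have hA0 : Aint r f 0 ρ = Fc r f 1 ρ := by
      have h1 := integral_Fc_succ hr hf 1 hρ
      have h0 : Fc r f 1 0 = 0 := by simpa using Fc_odd_zero hr hf 0
      unfold Aint
      simp only [pow_zero, Complex.ofReal_one, one_mul, show 2 * 0 + 2 = 1 + 1 from rfl]
      rw [h1, h0, sub_zero]
    rw [hA0, Complex.real_smul]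
    simp only [Nat.factorial_zero, Nat.cast_one, mul_one, pow_one]
    push_cast
    field_simp
  | succ m ih =>
    intro ρ hρ
    have hmem : ρ ^ 2 ∈ Ioc (0:ℝ) (r ^ 2) := sq_mem hρ
    have hu := uniqueDiffOn_Ioc (0:ℝ) (r ^ 2)
    have hρC : (ρ : ℂ) ≠ 0 := Complex.ofReal_ne_zero.mpr hρ.1.ne'
    rw [iteratedDerivWithin_succ]
    have hcongr : EqOn
        (iteratedDerivWithin (m + 1) (fun σ => f (Real.sqrt σ)) (Ioc 0 (r ^ 2)))
        (fun σ => ((2 : ℂ) ^ (2 * m + 1) * (m.factorial : ℂ))⁻¹ *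
          ((((Real.sqrt σ : ℝ) : ℂ) ^ (2 * m + 1))⁻¹ * Aint r f m (Real.sqrt σ)))
        (Ioc 0 (r ^ 2)) := by
      intro σ hσ
      have hσ' : Real.sqrt σ ∈ Ioc 0 r := maps_sqrt hr hσ
      have h2 : (Real.sqrt σ) ^ 2 = σ := Real.sq_sqrt hσ.1.le
      have h3 := ih (Real.sqrt σ) hσ'
      rw [h2] at h3
      rw [h3, mul_assoc]
    rw [derivWithin_congr hcongr (hcongr hmem)]
    have hinv : HasDerivAt (fun x : ℝ => ((x : ℂ) ^ (2 * m + 1))⁻¹)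
        (-((((2 * m + 1 : ℕ) : ℂ)) * (ρ : ℂ) ^ (2 * m)) / ((ρ : ℂ) ^ (2 * m + 1)) ^ 2) ρ := by
      have h6 : HasDerivAt (fun z : ℂ => (z ^ (2 * m + 1))⁻¹)
          (-((((2 * m + 1 : ℕ) : ℂ)) * (ρ : ℂ) ^ (2 * m)) / ((ρ : ℂ) ^ (2 * m + 1)) ^ 2)
          ((ρ : ℝ) : ℂ) := by
        have h7 := (hasDerivAt_pow (2 * m + 1) ((ρ : ℝ) : ℂ)).fun_inv (pow_ne_zero _ hρC)
        simpa [Nat.add_sub_cancel] using h7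
      exact h6.comp_ofReal
    have hA := hasDerivAt_A hr hf m ρ
    have hψ := (hinv.mul hA).const_mul (((2 : ℂ) ^ (2 * m + 1) * (m.factorial : ℂ))⁻¹)
    have hcomp : HasDerivWithinAt
        (fun σ : ℝ => ((2 : ℂ) ^ (2 * m + 1) * (m.factorial : ℂ))⁻¹ *
          ((((Real.sqrt σ : ℝ) : ℂ) ^ (2 * m + 1))⁻¹ * Aint r f m (Real.sqrt σ)))
        ((1 / (2 * ρ)) • (((2 : ℂ) ^ (2 * m + 1) * (m.factorial : ℂ))⁻¹ *
          ((-((((2 * m + 1 : ℕ) : ℂ)) * (ρ : ℂ) ^ (2 * m)) / ((ρ : ℂ) ^ (2 * m + 1)) ^ 2) *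
              Aint r f m ρ +
            ((ρ : ℂ) ^ (2 * m + 1))⁻¹ *
              (2 * (m : ℂ) * (ρ : ℂ) * Bint r f m ρ +
                (0 : ℂ) ^ m * (ρ : ℂ) ^ (2 * m) * Fc r f (2 * m + 2) ρ))))
        (Ioc 0 (r ^ 2)) (ρ ^ 2) := by
      exact (hψ.hasDerivWithinAt (s := Ioc 0 r)).scomp_of_eq (ρ ^ 2)
        (hasDerivWithinAt_sqrt_sq hr hρ) (maps_sqrt hr) (Real.sqrt_sq hρ.1.le).symm
    rw [hcomp.derivWithin (hu _ hmem)]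
    rw [A_succ hr hf m hρ, Complex.real_smul]
    have hfacC : ((m.factorial : ℕ) : ℂ) ≠ 0 := Nat.cast_ne_zero.mpr m.factorial_ne_zero
    have h2m3 : (2 : ℂ) ^ (2 * (m + 1) + 1) = (2 : ℂ) ^ (2 * m + 1) * 4 := by
      rw [show 2 * (m + 1) + 1 = (2 * m + 1) + 2 from by omega, pow_add]
      norm_num
    have hρ3 : (ρ : ℂ) ^ (2 * (m + 1) + 1) = (ρ : ℂ) ^ (2 * m) * (ρ : ℂ) ^ 3 := by
      rw [show 2 * (m + 1) + 1 = 2 * m + 3 from by omega, pow_add]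
    have hρ1 : (ρ : ℂ) ^ (2 * m + 1) = (ρ : ℂ) ^ (2 * m) * (ρ : ℂ) := by rw [pow_succ]
    have hP : (ρ : ℂ) ^ (2 * m) ≠ 0 := pow_ne_zero _ hρC
    have hQ : (2 : ℂ) ^ (2 * m + 1) ≠ 0 := pow_ne_zero _ two_ne_zero
    rw [Nat.factorial_succ, h2m3, hρ3, hρ1]
    push_cast
    rcases Nat.eq_zero_or_pos m with hm | hm
    · subst hm
      norm_num
      have h9 : ((ρ:ℂ))⁻¹ ^ 4 * (ρ:ℂ) ^ 4 = 1 := by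
        rw [← mul_pow, inv_mul_cancel₀ hρC, one_pow]
      field_simp
      ring
    · rw [zero_pow hm.ne']
      obtain ⟨P, hPg⟩ : ∃ P : ℂ, (ρ:ℂ) ^ (2*m) = P := ⟨_, rfl⟩
      obtain ⟨Q, hQg⟩ : ∃ Q : ℂ, (2:ℂ) ^ (2*m+1) = Q := ⟨_, rfl⟩
      rw [hPg] at hP
      rw [hQg] at hQ
      rw [hPg, hQg]
      have hm1 : ((m:ℂ) + 1) ≠ 0 := by
        have h10 : ((m + 1 : ℕ) : ℂ) ≠ 0 := Nat.cast_ne_zero.mpr (Nat.succ_ne_zero m)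
        push_cast at h10; exact h10
      field_simp [hm1]
      have hX : P ^ 3 * (P⁻¹) ^ 3 = 1 := by rw [← mul_pow, mul_inv_cancel₀ hP, one_pow]
      have hY : (ρ:ℂ) ^ 4 * ((ρ:ℂ)⁻¹) ^ 4 = 1 := by rw [← mul_pow, mul_inv_cancel₀ hρC, one_pow]
      have hZ : Q * Q⁻¹ = 1 := mul_inv_cancel₀ hQ
      have hW : ((m.factorial : ℕ) : ℂ) * (((m.factorial : ℕ) : ℂ))⁻¹ = 1 := mul_inv_cancel₀ hfacC
      ring

end DSA


/-- for `f ∈ C^∞_ev([0,r])` and `g(ρ) = f(√ρ)` on `(0,r²]`, the `n`-th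
derivative of `g` satisfies
`g⁽ⁿ⁾(ρ²) = (1/(2^(2n-1)(n-1)!)) ∫₀¹ (1-t²)^(n-1) f^(2n)(tρ) dt`. -/
theorem deriv_sqrt_profile (r : ℝ) (hr : 0 < r) (f : ℝ → ℂ) (hf : SmoothEvenOn r f)
    (n : ℕ) (hn : 1 ≤ n) (ρ : ℝ) (hρ : ρ ∈ Ioc (0 : ℝ) r) :
    iteratedDerivWithin n (fun σ => f (Real.sqrt σ)) (Ioc 0 (r ^ 2)) (ρ ^ 2) =
      (1 / (2 ^ (2 * n - 1) * (Nat.factorial (n - 1)) : ℂ)) *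
        ∫ t in (0 : ℝ)..1,
          (((1 - t ^ 2) ^ (n - 1) : ℝ) : ℂ) *
            iteratedDerivWithin (2 * n) f (Icc 0 r) (t * ρ) := by
  obtain ⟨m, rfl⟩ : ∃ m, n = m + 1 := ⟨n - 1, by omega⟩
  have hmain := DSA.main hr hf m ρ hρ
  have hcov := DSA.cov hr hf m hρ
  have hint : (∫ t in (0:ℝ)..1, (((1 - t ^ 2) ^ m : ℝ) : ℂ) *
      iteratedDerivWithin (2 * m + 2) f (Icc 0 r) (t * ρ)) =
      ∫ t in (0:ℝ)..1, (((1 - t ^ 2) ^ m : ℝ) : ℂ) * DSA.Fc r f (2 * m + 2) (t * ρ) := by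
    apply intervalIntegral.integral_congr
    intro t ht
    rw [uIcc_of_le zero_le_one] at ht
    have htρ : t * ρ ∈ Icc (0:ℝ) r := by
      constructor
      · exact mul_nonneg ht.1 hρ.1.le
      · calc t * ρ ≤ 1 * ρ := mul_le_mul_of_nonneg_right ht.2 hρ.1.le
          _ = ρ := one_mul ρ
          _ ≤ r := hρ.2
    simp only []
    rw [DSA.Fc_eq htρ]
  rw [show (m + 1) - 1 = m from rfl, show 2 * (m + 1) - 1 = 2 * m + 1 from by omega,
    show 2 * (m + 1) = 2 * m + 2 from by omega]
  rw [hmain, hint, hcov, one_div, mul_assoc]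
end
end

section
/- Let d ≥ 2 be an integer and r > 0. A function φ : closure(B^d_r) → ℂ is smooth on the closed ball closure(B^d_r) and radially symmetric (i.e., φ(Rx) = φ(x) for all rotations R ∈ SO(d) and all x) if and only if there exists f ∈ C^∞_ev([0,r]) such that φ(x) = f(|x|) for all x ∈ closure(B^d_r). -/
open MeasureTheory Metric Set

noncomputable section

section A

variable {r : ℝ} (hr : 0 < r) {f : ℝ → ℂ}

lemma aux_quad {f f' f'' : ℝ → ℂ} {s : Set ℝ} (hs : Convex ℝ s) {M : ℝ}
    (h1 : ∀ x ∈ s, HasDerivWithinAt f (f' x) s x)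
    (h2 : ∀ x ∈ s, HasDerivWithinAt f' (f'' x) s x)
    (hM : ∀ x ∈ s, ‖f'' x‖ ≤ M) {a b : ℝ} (ha : a ∈ s) (hb : b ∈ s) :
    ‖f b - f a - (b - a) • f' a‖ ≤ M * |b - a| ^ 2 := by
  have hM0 : 0 ≤ M := le_trans (norm_nonneg _) (hM a ha)
  have ht : uIcc a b ⊆ s := (Convex.ordConnected hs).uIcc_subset ha hb
  have hconv : Convex ℝ (uIcc a b) := convex_uIcc a b
  have hat : a ∈ uIcc a b := left_mem_uIcc
  have hbt : b ∈ uIcc a b := right_mem_uIcc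
  have lip : ∀ x ∈ uIcc a b, ‖f' x - f' a‖ ≤ M * ‖x - a‖ := by
    intro x hx
    exact hconv.norm_image_sub_le_of_norm_hasDerivWithin_le
      (fun y hy => (h2 y (ht hy)).mono ht) (fun y hy => hM y (ht hy)) hat hx
  have hu : ∀ x ∈ uIcc a b, HasDerivWithinAt (fun y => f y - y • f' a)
      (f' x - f' a) (uIcc a b) x := by
    intro x hx
    exact ((h1 x (ht hx)).mono ht).sub
      (by simpa using (hasDerivWithinAt_id x (uIcc a b)).smul_const (f' a))
  have bound : ∀ x ∈ uIcc a b, ‖f' x - f' a‖ ≤ M * |b - a| := by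
    intro x hx
    refine (lip x hx).trans ?_
    have := abs_sub_left_of_mem_uIcc hx
    calc M * ‖x - a‖ = M * |x - a| := by rw [Real.norm_eq_abs]
    _ ≤ M * |b - a| := by gcongr
  have := hconv.norm_image_sub_le_of_norm_hasDerivWithin_le hu bound hat hbt
  have heq : (f b - b • f' a) - (f a - a • f' a) = f b - f a - (b - a) • f' a := by
    rw [sub_smul]; ring_nf
  rw [heq] at this
  calc ‖f b - f a - (b - a) • f' a‖ ≤ M * |b - a| * ‖b - a‖ := this
  _ = M * |b - a| ^ 2 := by rw [Real.norm_eq_abs]; ring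

end A

section G

def Gk (r : ℝ) (f : ℝ → ℂ) (k : ℕ) (ρ : ℝ) : ℂ :=
  ∫ t in (0:ℝ)..1, t ^ k • iteratedDerivWithin (k + 2) f (Icc 0 r) (t * ρ)

variable {r : ℝ} {f : ℝ → ℂ}

lemma itd_hasDeriv (hr : 0 < r) (hf : ContDiffOn ℝ (⊤ : ℕ∞) f (Icc 0 r)) (j : ℕ)
    {ρ : ℝ} (hρ : ρ ∈ Icc 0 r) :
    HasDerivWithinAt (iteratedDerivWithin j f (Icc 0 r))
      (iteratedDerivWithin (j + 1) f (Icc 0 r) ρ) (Icc 0 r) ρ := by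
  have hdiff : DifferentiableOn ℝ (iteratedDerivWithin j f (Icc 0 r)) (Icc 0 r) :=
    hf.differentiableOn_iteratedDerivWithin (by exact_mod_cast lt_top_iff_ne_top.2 (by simp))
      (uniqueDiffOn_Icc hr)
  have := (hdiff ρ hρ).hasDerivWithinAt
  rwa [← iteratedDerivWithin_succ] at this

lemma itd_cont (hr : 0 < r) (hf : ContDiffOn ℝ (⊤ : ℕ∞) f (Icc 0 r)) (j : ℕ) :
    ContinuousOn (iteratedDerivWithin j f (Icc 0 r)) (Icc 0 r) :=
  fun ρ hρ => ((itd_hasDeriv hr hf j hρ).differentiableWithinAt).continuousWithinAt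

lemma mem_Icc_mul {ρ t : ℝ} (hρ : ρ ∈ Icc 0 r) (ht : t ∈ Icc (0:ℝ) 1) :
    t * ρ ∈ Icc 0 r := by
  constructor
  · exact mul_nonneg ht.1 hρ.1
  · calc t * ρ ≤ 1 * ρ := by apply mul_le_mul_of_nonneg_right ht.2 hρ.1
    _ ≤ r := by simpa using hρ.2

lemma integrand_cont (hr : 0 < r) (hf : ContDiffOn ℝ (⊤ : ℕ∞) f (Icc 0 r)) (j k : ℕ)
    {ρ : ℝ} (hρ : ρ ∈ Icc 0 r) :
    ContinuousOn (fun t : ℝ => t ^ k • iteratedDerivWithin j f (Icc 0 r) (t * ρ))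
      (uIcc (0:ℝ) 1) := by
  rw [uIcc_of_le zero_le_one]
  refine ContinuousOn.smul (continuousOn_pow k) ?_
  refine (itd_cont hr hf j).comp (by fun_prop) ?_
  intro t ht; exact mem_Icc_mul hρ ht

lemma integrand_integrable (hr : 0 < r) (hf : ContDiffOn ℝ (⊤ : ℕ∞) f (Icc 0 r)) (j k : ℕ)
    {ρ : ℝ} (hρ : ρ ∈ Icc 0 r) :
    IntervalIntegrable (fun t : ℝ => t ^ k • iteratedDerivWithin j f (Icc 0 r) (t * ρ))
      volume 0 1 :=
  (integrand_cont hr hf j k hρ).intervalIntegrable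

end G

section G2
variable {r : ℝ} {f : ℝ → ℂ}

lemma Gk_hasDeriv (hr : 0 < r) (hf : ContDiffOn ℝ (⊤ : ℕ∞) f (Icc 0 r)) (k : ℕ)
    {ρ : ℝ} (hρ : ρ ∈ Icc 0 r) :
    HasDerivWithinAt (Gk r f k) (Gk r f (k + 1) ρ) (Icc 0 r) ρ := by
  set s := Icc (0:ℝ) r
  set F : ℕ → ℝ → ℂ := fun j => iteratedDerivWithin j f s with hF
  obtain ⟨M, hM⟩ : ∃ M, ∀ x ∈ s, ‖F (k + 4) x‖ ≤ M :=
    isCompact_Icc.exists_bound_of_continuousOn (itd_cont hr hf (k + 4))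
  have hM0 : 0 ≤ M := le_trans (norm_nonneg _) (hM 0 ⟨le_refl _, hr.le⟩)
  -- pointwise quadratic estimate
  have key : ∀ ρ' ∈ s, ‖Gk r f k ρ' - Gk r f k ρ - (ρ' - ρ) • Gk r f (k + 1) ρ‖
      ≤ M * |ρ' - ρ| ^ 2 := by
    intro ρ' hρ'
    have i1 := integrand_integrable hr hf (k + 2) k hρ'
    have i2 := integrand_integrable hr hf (k + 2) k hρ
    have i3 := (integrand_integrable hr hf (k + 3) (k + 1) hρ).smul (ρ' - ρ)
    have i3' : IntervalIntegrable
        (fun t : ℝ => (ρ' - ρ) • (t ^ (k+1) • F (k+3) (t * ρ))) volume 0 1 := i3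
    have e1 : Gk r f k ρ' - Gk r f k ρ
        = ∫ t in (0:ℝ)..1, (t ^ k • F (k+2) (t * ρ') - t ^ k • F (k+2) (t * ρ)) :=
      (intervalIntegral.integral_sub i1 i2).symm
    have e2 : (ρ' - ρ) • Gk r f (k + 1) ρ
        = ∫ t in (0:ℝ)..1, (ρ' - ρ) • (t ^ (k+1) • F (k+3) (t * ρ)) := by
      rw [intervalIntegral.integral_smul]; rfl
    have heq : Gk r f k ρ' - Gk r f k ρ - (ρ' - ρ) • Gk r f (k + 1) ρ
        = ∫ t in (0:ℝ)..1, (t ^ k • F (k+2) (t * ρ') - t ^ k • F (k+2) (t * ρ)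
            - (ρ' - ρ) • (t ^ (k+1) • F (k+3) (t * ρ))) := by
      rw [e1, e2, ← intervalIntegral.integral_sub (i1.sub i2) i3']
    rw [heq]
    have hbound : ∀ t ∈ Set.uIoc (0:ℝ) 1,
        ‖t ^ k • F (k+2) (t * ρ') - t ^ k • F (k+2) (t * ρ)
            - (ρ' - ρ) • (t ^ (k+1) • F (k+3) (t * ρ))‖ ≤ M * |ρ' - ρ| ^ 2 := by
      intro t ht
      rw [uIoc_of_le zero_le_one] at ht
      have ht' : t ∈ Icc (0:ℝ) 1 := ⟨ht.1.le, ht.2⟩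
      have hq := aux_quad (convex_Icc 0 r) (fun x hx => itd_hasDeriv hr hf (k+2) hx)
        (fun x hx => itd_hasDeriv hr hf (k+3) hx) hM
        (mem_Icc_mul hρ ht') (mem_Icc_mul hρ' ht')
      have hrw : t ^ k • F (k+2) (t * ρ') - t ^ k • F (k+2) (t * ρ)
            - (ρ' - ρ) • (t ^ (k+1) • F (k+3) (t * ρ))
          = t ^ k • (F (k+2) (t * ρ') - F (k+2) (t * ρ) - (t * ρ' - t * ρ) • F (k+3) (t * ρ)) := by
        simp only [smul_sub, smul_smul]
        ring_nf
      rw [hrw, norm_smul]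
      have h1 : ‖t ^ k‖ ≤ 1 := by
        rw [Real.norm_eq_abs, abs_pow]
        exact pow_le_one₀ (abs_nonneg t) (by rw [abs_of_nonneg ht.1.le]; exact ht.2)
      calc ‖t ^ k‖ * ‖F (k+2) (t * ρ') - F (k+2) (t * ρ) - (t * ρ' - t * ρ) • F (k+3) (t * ρ)‖
          ≤ 1 * (M * |t * ρ' - t * ρ| ^ 2) := by
            exact mul_le_mul h1 hq (norm_nonneg _) zero_le_one
        _ ≤ M * |ρ' - ρ| ^ 2 := by
            rw [one_mul]
            have : |t * ρ' - t * ρ| ≤ |ρ' - ρ| := by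
              rw [← mul_sub, abs_mul, abs_of_nonneg ht.1.le]
              calc t * |ρ' - ρ| ≤ 1 * |ρ' - ρ| :=
                mul_le_mul_of_nonneg_right ht.2 (abs_nonneg _)
              _ = |ρ' - ρ| := one_mul _
            gcongr
    calc ‖∫ t in (0:ℝ)..1, (t ^ k • F (k+2) (t * ρ') - t ^ k • F (k+2) (t * ρ)
            - (ρ' - ρ) • (t ^ (k+1) • F (k+3) (t * ρ)))‖
        ≤ M * |ρ' - ρ| ^ 2 * |1 - 0| :=
          intervalIntegral.norm_integral_le_of_norm_le_const hbound
      _ = M * |ρ' - ρ| ^ 2 := by norm_num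
  -- conclude via little-o
  rw [hasDerivWithinAt_iff_isLittleO]
  have hsq : (fun ρ' : ℝ => (ρ' - ρ) ^ 2) =o[nhdsWithin ρ s] fun ρ' => ρ' - ρ := by
    rw [Asymptotics.isLittleO_iff]
    intro c hc
    have htend : Filter.Tendsto (fun ρ' : ℝ => ρ' - ρ) (nhdsWithin ρ s) (nhds 0) := by
      have : Filter.Tendsto (fun ρ' : ℝ => ρ' - ρ) (nhds ρ) (nhds (ρ - ρ)) :=
        (continuous_id.sub continuous_const).tendsto ρ
      rw [sub_self] at this
      exact this.mono_left nhdsWithin_le_nhds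
    filter_upwards [htend (Metric.closedBall_mem_nhds 0 hc)] with x hx
    rw [mem_preimage, Metric.mem_closedBall, dist_zero_right, Real.norm_eq_abs] at hx
    rw [Real.norm_eq_abs, Real.norm_eq_abs, abs_pow, pow_two]
    exact mul_le_mul_of_nonneg_right hx (abs_nonneg _)
  refine Asymptotics.IsBigO.trans_isLittleO ?_ hsq
  rw [Asymptotics.isBigO_iff]
  refine ⟨M, ?_⟩
  filter_upwards [eventually_mem_nhdsWithin] with ρ' hρ'
  simpa [sq_abs] using key ρ' hρ'

end G2

section G3
variable {r : ℝ} {f : ℝ → ℂ}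

lemma Gk_derivWithin (hr : 0 < r) (hf : ContDiffOn ℝ (⊤ : ℕ∞) f (Icc 0 r)) (k : ℕ)
    {ρ : ℝ} (hρ : ρ ∈ Icc 0 r) :
    derivWithin (Gk r f k) (Icc 0 r) ρ = Gk r f (k + 1) ρ :=
  (Gk_hasDeriv hr hf k hρ).derivWithin ((uniqueDiffOn_Icc hr).uniqueDiffWithinAt hρ)

lemma Gk_diffOn (hr : 0 < r) (hf : ContDiffOn ℝ (⊤ : ℕ∞) f (Icc 0 r)) (k : ℕ) :
    DifferentiableOn ℝ (Gk r f k) (Icc 0 r) :=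
  fun ρ hρ => (Gk_hasDeriv hr hf k hρ).differentiableWithinAt

lemma Gk_contDiffOn_nat (hr : 0 < r) (hf : ContDiffOn ℝ (⊤ : ℕ∞) f (Icc 0 r)) :
    ∀ (n k : ℕ), ContDiffOn ℝ n (Gk r f k) (Icc 0 r) := by
  intro n
  induction n with
  | zero =>
    intro k
    rw [show ((0 : ℕ) : WithTop ℕ∞) = 0 from rfl, contDiffOn_zero]
    exact (Gk_diffOn hr hf k).continuousOn
  | succ n ih =>
    intro k
    rw [show ((n + 1 : ℕ) : WithTop ℕ∞) = (n : WithTop ℕ∞) + 1 by push_cast; rfl,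
      contDiffOn_succ_iff_derivWithin (uniqueDiffOn_Icc hr)]
    refine ⟨Gk_diffOn hr hf k, by simp, ?_⟩
    exact (ih (k + 1)).congr fun ρ hρ => Gk_derivWithin hr hf k hρ

lemma Gk_contDiffOn (hr : 0 < r) (hf : ContDiffOn ℝ (⊤ : ℕ∞) f (Icc 0 r)) (k : ℕ) :
    ContDiffOn ℝ (⊤ : ℕ∞) (Gk r f k) (Icc 0 r) := by
  rw [contDiffOn_infty]
  exact fun n => Gk_contDiffOn_nat hr hf n k

lemma Gk_iteratedDerivWithin (hr : 0 < r) (hf : ContDiffOn ℝ (⊤ : ℕ∞) f (Icc 0 r)) :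
    ∀ (m k : ℕ), ∀ ρ ∈ Icc 0 r,
      iteratedDerivWithin m (Gk r f k) (Icc 0 r) ρ = Gk r f (k + m) ρ := by
  intro m
  induction m with
  | zero => intro k ρ hρ; simp
  | succ m ih =>
    intro k ρ hρ
    rw [iteratedDerivWithin_succ']
    have hcongr := iteratedDerivWithin_congr
      (fun x hx => Gk_derivWithin hr hf k hx) (n := m) hρ
    rw [hcongr, ih (k + 1) ρ hρ]
    ring_nf

end G3

section G4
variable {r : ℝ} {f : ℝ → ℂ}

lemma Gk_zero_spec (hr : 0 < r) (hf : ContDiffOn ℝ (⊤ : ℕ∞) f (Icc 0 r))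
    (h1 : iteratedDerivWithin 1 f (Icc 0 r) 0 = 0) {ρ : ℝ} (hρ : ρ ∈ Ioc 0 r) :
    Gk r f 0 ρ = (ρ⁻¹ : ℝ) • derivWithin f (Icc 0 r) ρ := by
  have hρr : ρ ∈ Icc 0 r := ⟨hρ.1.le, hρ.2⟩
  have hsub : Icc (0:ℝ) ρ ⊆ Icc 0 r := Icc_subset_Icc le_rfl hρ.2
  have e0 : Gk r f 0 ρ = ∫ t in (0:ℝ)..1, iteratedDerivWithin 2 f (Icc 0 r) (t * ρ) := by
    unfold Gk
    congr 1
    funext t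
    norm_num
  have e1 : ∫ t in (0:ℝ)..1, iteratedDerivWithin 2 f (Icc 0 r) (t * ρ)
      = ρ⁻¹ • ∫ s in (0:ℝ)..ρ, iteratedDerivWithin 2 f (Icc 0 r) s := by
    have := intervalIntegral.integral_comp_mul_right
      (fun s => iteratedDerivWithin 2 f (Icc 0 r) s) (ne_of_gt hρ.1) (a := 0) (b := 1)
    simpa using this
  have e2 : ∫ s in (0:ℝ)..ρ, iteratedDerivWithin 2 f (Icc 0 r) s
      = iteratedDerivWithin 1 f (Icc 0 r) ρ - iteratedDerivWithin 1 f (Icc 0 r) 0 := by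
    refine intervalIntegral.integral_eq_sub_of_hasDeriv_right_of_le hρ.1.le ?_ ?_ ?_
    · exact (itd_cont hr hf 1).mono hsub
    · intro x hx
      have hx' : x ∈ Icc 0 r := hsub ⟨hx.1.le, hx.2.le⟩
      have hnhds : Icc (0:ℝ) r ∈ nhds x :=
        Icc_mem_nhds hx.1 (lt_of_lt_of_le hx.2 hρ.2)
      exact (((itd_hasDeriv hr hf 1 hx').hasDerivAt hnhds).hasDerivWithinAt)
    · exact ((itd_cont hr hf 2).mono hsub).intervalIntegrable_of_Icc hρ.1.le
  rw [e0, e1, e2, h1, sub_zero,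
    iteratedDerivWithin_one]

lemma Gk_odd_zero (hr : 0 < r) (hf : ContDiffOn ℝ (⊤ : ℕ∞) f (Icc 0 r))
    (heven : ∀ n : ℕ, iteratedDerivWithin (2 * n + 1) f (Icc 0 r) 0 = 0) (n : ℕ) :
    Gk r f (2 * n + 1) 0 = 0 := by
  unfold Gk
  have : ∀ t : ℝ, t * (0:ℝ) = 0 := fun t => mul_zero t
  have heq : (fun t : ℝ => t ^ (2 * n + 1) •
      iteratedDerivWithin (2 * n + 1 + 2) f (Icc 0 r) (t * 0))
      = fun t : ℝ => t ^ (2 * n + 1) • iteratedDerivWithin (2 * (n + 1) + 1) f (Icc 0 r) 0 := by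
    funext t
    have h23 : 2 * n + 1 + 2 = 2 * (n + 1) + 1 := by ring
    rw [mul_zero, h23]
  rw [heq, heven (n + 1)]
  simp

end G4

/-- The Hadamard-type lemma: division of the derivative by `ρ` preserves `C^∞_ev`. -/
lemma hadamard {r : ℝ} (hr : 0 < r) {f : ℝ → ℂ} (hf : SmoothEvenOn r f) :
    ∃ g : ℝ → ℂ, SmoothEvenOn r g ∧
      ∀ ρ ∈ Ioc (0:ℝ) r, g ρ = (ρ⁻¹ : ℝ) • derivWithin f (Icc 0 r) ρ := by
  refine ⟨Gk r f 0, ⟨Gk_contDiffOn hr hf.1 0, ?_⟩, fun ρ hρ => Gk_zero_spec hr hf.1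
    (by simpa using hf.2 0) hρ⟩
  intro n
  rw [Gk_iteratedDerivWithin hr hf.1 (2 * n + 1) 0 0 ⟨le_rfl, hr.le⟩,
    show 0 + (2 * n + 1) = 2 * n + 1 from by ring]
  exact Gk_odd_zero hr hf.1 hf.2 n

section B
variable {E : Type*} [NormedAddCommGroup E] [InnerProductSpace ℝ E]

lemma hasFDerivAt_norm_of_ne {x : E} (hx : x ≠ 0) :
    HasFDerivAt (fun y : E => ‖y‖) (‖x‖⁻¹ • (innerSL ℝ x : E →L[ℝ] ℝ)) x := by
  have hnx : ‖x‖ ≠ 0 := norm_ne_zero_iff.2 hx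
  have h1 : HasFDerivAt (fun y : E => ‖y‖ ^ 2) (2 • (innerSL ℝ x : E →L[ℝ] ℝ)) x :=
    (hasStrictFDerivAt_norm_sq x).hasFDerivAt
  have h2 : HasDerivAt Real.sqrt (1 / (2 * Real.sqrt (‖x‖ ^ 2))) (‖x‖ ^ 2) := by
    apply Real.hasDerivAt_sqrt
    positivity
  have h3 := h2.comp_hasFDerivAt x h1
  have h4 : (fun y : E => Real.sqrt (‖y‖ ^ 2)) = fun y : E => ‖y‖ := by
    funext y; rw [Real.sqrt_sq (norm_nonneg y)]
  rw [show Real.sqrt ∘ (fun y : E => ‖y‖ ^ 2) = fun y : E => Real.sqrt (‖y‖ ^ 2) from rfl,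
    h4] at h3
  refine h3.congr_fderiv ?_
  rw [Real.sqrt_sq (norm_nonneg x)]
  ext v
  simp only [ContinuousLinearMap.smul_apply, smul_eq_mul, two_smul,
    ContinuousLinearMap.add_apply]
  field_simp
  ring

variable {r : ℝ}

lemma closedBall_uniqueDiffOn (hr : 0 < r) :
    UniqueDiffOn ℝ (closedBall (0:E) r) := by
  refine uniqueDiffOn_convex (convex_closedBall _ _) ?_
  exact ⟨0, mem_interior_iff_mem_nhds.2 (Metric.closedBall_mem_nhds 0 hr)⟩

lemma norm_mapsTo (hr : 0 ≤ r) : MapsTo (fun x : E => ‖x‖) (closedBall (0:E) r) (Icc 0 r) :=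
  fun x hx => ⟨norm_nonneg x, by rwa [mem_closedBall_zero_iff] at hx⟩

lemma radial_contDiffOn_nat (hr : 0 < r) :
    ∀ n : ℕ, ∀ f : ℝ → ℂ, SmoothEvenOn r f →
      ContDiffOn ℝ n (fun x : E => f ‖x‖) (closedBall (0:E) r) := by
  intro n
  induction n with
  | zero =>
    intro f hf
    rw [show ((0 : ℕ) : WithTop ℕ∞) = 0 from rfl, contDiffOn_zero]
    exact hf.1.continuousOn.comp continuous_norm.continuousOn (norm_mapsTo hr.le)
  | succ n ih =>
    intro f hf
    obtain ⟨g, hg, hgspec⟩ := hadamard hr hf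
    set s := closedBall (0:E) r with hs
    set L : E → (E →L[ℝ] ℂ) :=
      fun x => ((innerSL ℝ x : E →L[ℝ] ℝ)).smulRight (g ‖x‖) with hL
    have hfd : DifferentiableOn ℝ f (Icc 0 r) :=
      hf.1.differentiableOn (by simp)
    have hLderiv : ∀ x ∈ s, HasFDerivWithinAt (fun y : E => f ‖y‖) (L x) s x := by
      intro x hx
      rcases eq_or_ne x 0 with rfl | hx0
      · -- at the origin, derivative is zero
        have hL0 : L 0 = 0 := by
          ext v
          simp [hL]
        rw [hL0]
        have hd0 : HasDerivWithinAt f 0 (Icc 0 r) 0 := by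
          have := (hfd 0 ⟨le_rfl, hr.le⟩).hasDerivWithinAt
          have hz : derivWithin f (Icc 0 r) 0 = 0 := by
            have h1 := hf.2 0
            rwa [show 2 * 0 + 1 = 1 from rfl,
              iteratedDerivWithin_one] at h1
          rwa [hz] at this
        have hlit : (fun ρ : ℝ => f ρ - f 0) =o[nhdsWithin 0 (Icc 0 r)] fun ρ : ℝ => ρ := by
          have := hasDerivWithinAt_iff_isLittleO.1 hd0
          simpa using this
        have htend : Filter.Tendsto (fun y : E => ‖y‖) (nhdsWithin 0 s)
            (nhdsWithin 0 (Icc 0 r)) := by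
          have : ContinuousWithinAt (fun y : E => ‖y‖) s 0 :=
            continuous_norm.continuousWithinAt
          simpa using this.tendsto_nhdsWithin (norm_mapsTo hr.le)
        have hcomp := hlit.comp_tendsto htend
        have : (fun y : E => f ‖y‖ - f 0) =o[nhdsWithin 0 s] fun y : E => ‖y‖ := hcomp
        have hbig : (fun y : E => ‖y‖) =O[nhdsWithin 0 s] fun y : E => y :=
          (Asymptotics.isBigO_refl (fun y : E => y) _).norm_left
        refine HasFDerivAtFilter.of_isLittleO ?_
        simpa [Function.comp_def] using this.trans_isBigO hbig
      · -- away from the origin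
        have hxn : ‖x‖ ∈ Icc 0 r := norm_mapsTo hr.le hx
        have hxpos : 0 < ‖x‖ := norm_pos_iff.2 hx0
        have hf' : HasDerivWithinAt f (derivWithin f (Icc 0 r) ‖x‖) (Icc 0 r) ‖x‖ :=
          (hfd ‖x‖ hxn).hasDerivWithinAt
        have hN : HasFDerivWithinAt (fun y : E => ‖y‖)
            (‖x‖⁻¹ • (innerSL ℝ x : E →L[ℝ] ℝ)) s x :=
          (hasFDerivAt_norm_of_ne hx0).hasFDerivWithinAt
        have hcomp := (hf'.hasFDerivWithinAt).comp x hN (norm_mapsTo hr.le)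
        have hLx : L x = (ContinuousLinearMap.smulRight (1 : ℝ →L[ℝ] ℝ)
            (derivWithin f (Icc 0 r) ‖x‖)).comp (‖x‖⁻¹ • (innerSL ℝ x : E →L[ℝ] ℝ)) := by
          ext v
          have hgx : g ‖x‖ = (‖x‖⁻¹ : ℝ) • derivWithin f (Icc 0 r) ‖x‖ :=
            hgspec ‖x‖ ⟨hxpos, hxn.2⟩
          simp only [hL, ContinuousLinearMap.smulRight_apply, ContinuousLinearMap.coe_comp',
            Function.comp_apply, ContinuousLinearMap.smul_apply,
            ContinuousLinearMap.one_apply, hgx]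
          rw [smul_smul, smul_eq_mul, mul_comm]
        rw [hLx]
        exact hcomp
    have hLsmooth : ContDiffOn ℝ n L s := by
      have hT : ContDiffOn ℝ n (fun x : E => (innerSL ℝ x : E →L[ℝ] ℝ)) s :=
        (ContinuousLinearMap.contDiff (innerSL ℝ : E →L[ℝ] (E →L[ℝ] ℝ))).contDiffOn
      exact hT.smulRight (ih g hg)
    have hdiff : DifferentiableOn ℝ (fun y : E => f ‖y‖) s :=
      fun x hx => (hLderiv x hx).differentiableWithinAt
    rw [show ((n + 1 : ℕ) : WithTop ℕ∞) = (n : WithTop ℕ∞) + 1 by push_cast; rfl,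
      contDiffOn_succ_iff_fderivWithin (closedBall_uniqueDiffOn hr)]
    refine ⟨hdiff, by simp, ?_⟩
    refine hLsmooth.congr fun x hx => ?_
    exact (hLderiv x hx).fderivWithin ((closedBall_uniqueDiffOn hr) x hx)

lemma radial_contDiffOn (hr : 0 < r) (f : ℝ → ℂ) (hf : SmoothEvenOn r f) :
    ContDiffOn ℝ (⊤:ℕ∞) (fun x : E => f ‖x‖) (closedBall (0:E) r) := by
  rw [contDiffOn_infty]
  exact fun n => radial_contDiffOn_nat hr n f hf

end B

section C
open Matrix
variable {d : ℕ}

lemma toEuclideanLin_norm (M : Matrix (Fin d) (Fin d) ℝ)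
    (hM : M ∈ Matrix.orthogonalGroup (Fin d) ℝ) (x : EuclideanSpace ℝ (Fin d)) :
    ‖Matrix.toEuclideanLin M x‖ = ‖x‖ := by
  have key : ∀ y : EuclideanSpace ℝ (Fin d),
      (inner ℝ y y : ℝ) = dotProduct ((WithLp.equiv 2 _) y) ((WithLp.equiv 2 _) y) := by
    intro y
    rw [EuclideanSpace.inner_eq_star_dotProduct]
    simp
  have horth : Mᵀ * M = 1 := by
    have := (Matrix.mem_orthogonalGroup_iff' (Fin d) ℝ).1 hM
    exact this
  have hinner : (inner ℝ (Matrix.toEuclideanLin M x) (Matrix.toEuclideanLin M x) : ℝ)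
      = inner ℝ x x := by
    rw [key, key, Matrix.toEuclideanLin_apply]
    rw [show (WithLp.equiv 2 (Fin d → ℝ)) (WithLp.toLp 2
        (M.mulVec x.ofLp)) = M.mulVec ((WithLp.equiv 2 (Fin d → ℝ)) x)
      from rfl]
    rw [Matrix.dotProduct_mulVec, ← Matrix.vecMul_transpose, Matrix.vecMul_vecMul,
      horth, Matrix.vecMul_one]
  have h1 : ‖Matrix.toEuclideanLin M x‖ ^ 2 = ‖x‖ ^ 2 := by
    rw [← real_inner_self_eq_norm_sq, ← real_inner_self_eq_norm_sq, hinner]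
  rw [← Real.sqrt_sq (norm_nonneg (Matrix.toEuclideanLin M x)), h1,
    Real.sqrt_sq (norm_nonneg x)]

lemma isometry_matrix (T : EuclideanSpace ℝ (Fin d) ≃ₗᵢ[ℝ] EuclideanSpace ℝ (Fin d)) :
    ∃ M : Matrix (Fin d) (Fin d) ℝ, M ∈ Matrix.orthogonalGroup (Fin d) ℝ ∧
      ∀ v : EuclideanSpace ℝ (Fin d), Matrix.toEuclideanLin M v = T v := by
  set M : Matrix (Fin d) (Fin d) ℝ := Matrix.of fun i j => T (EuclideanSpace.single j 1) i
    with hMdef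
  have happ : ∀ v : EuclideanSpace ℝ (Fin d), Matrix.toEuclideanLin M v = T v := by
    intro v
    have hv : v = ∑ j : Fin d, v j • EuclideanSpace.single j (1:ℝ) := by
      ext k
      rw [WithLp.ofLp_sum, Finset.sum_apply]
      simp [EuclideanSpace.single_apply]
    ext i
    rw [Matrix.toEuclideanLin_apply]
    show (M.mulVec v) i = (T v) i
    rw [Matrix.mulVec]
    show dotProduct (fun j => M i j) v = T v i
    rw [dotProduct]
    conv_rhs => rw [hv]
    rw [map_sum]
    rw [WithLp.ofLp_sum, Finset.sum_apply]
    congr 1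
    funext j
    rw [_root_.map_smul]
    show M i j * v j = (v j • T (EuclideanSpace.single j 1)) i
    rw [PiLp.smul_apply]
    simp [M, mul_comm]
  refine ⟨M, ?_, happ⟩
  rw [Matrix.mem_orthogonalGroup_iff' (Fin d) ℝ]
  ext j k
  rw [Matrix.mul_apply, Matrix.one_apply]
  have : ∀ i : Fin d, Mᵀ j i * M i k = T (EuclideanSpace.single j 1) i
      * T (EuclideanSpace.single k 1) i := by
    intro i; rw [Matrix.transpose_apply]; rfl
  rw [Finset.sum_congr rfl fun i _ => this i]
  have hip : ∑ i : Fin d, T (EuclideanSpace.single j 1) i * T (EuclideanSpace.single k 1) i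
      = (inner ℝ (T (EuclideanSpace.single j (1:ℝ))) (T (EuclideanSpace.single k (1:ℝ))) : ℝ) := by
    rw [PiLp.inner_apply]
    simp [RCLike.inner_apply, mul_comm]
  rw [hip, LinearIsometryEquiv.inner_map_map, EuclideanSpace.inner_single_left]
  simp [EuclideanSpace.single_apply, eq_comm]

lemma mem_orth_iff_transpose (M : Matrix (Fin d) (Fin d) ℝ) :
    M ∈ Matrix.orthogonalGroup (Fin d) ℝ ↔ Mᵀ * M = 1 := by
  rw [Matrix.mem_orthogonalGroup_iff' (Fin d) ℝ]

lemma diag_orth (v : Fin d → ℝ) (hv : ∀ i, v i * v i = 1) :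
    Matrix.diagonal v ∈ Matrix.orthogonalGroup (Fin d) ℝ := by
  rw [mem_orth_iff_transpose, Matrix.diagonal_transpose, Matrix.diagonal_mul_diagonal]
  rw [show (fun i => v i * v i) = fun _ => (1:ℝ) from funext hv]
  exact Matrix.diagonal_one

lemma toEuclideanLin_diagonal (v : Fin d → ℝ) (y : EuclideanSpace ℝ (Fin d)) (i : Fin d) :
    Matrix.toEuclideanLin (Matrix.diagonal v) y i = v i * y i := by
  rw [Matrix.toEuclideanLin_apply]
  exact Matrix.mulVec_diagonal v _ i

lemma exists_so (hd : 2 ≤ d) (x y : EuclideanSpace ℝ (Fin d)) (hxy : ‖y‖ = ‖x‖)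
    (hy1 : y ⟨1, by omega⟩ = 0) :
    ∃ R : Matrix.specialOrthogonalGroup (Fin d) ℝ,
      Matrix.toEuclideanLin (R : Matrix (Fin d) (Fin d) ℝ) y = x := by
  set T := Submodule.reflection (Submodule.span ℝ {y - x})ᗮ with hTdef
  have hT : T y = x := Submodule.reflection_sub hxy
  obtain ⟨M, hMo, hMa⟩ := isometry_matrix T
  have horth := (mem_orth_iff_transpose M).1 hMo
  have hdet : M.det = 1 ∨ M.det = -1 := by
    have := congrArg Matrix.det horth
    rw [Matrix.det_mul, Matrix.det_transpose, Matrix.det_one] at this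
    exact mul_self_eq_one_iff.1 this
  rcases hdet with hdet | hdet
  · exact ⟨⟨M, (Matrix.mem_specialOrthogonalGroup_iff).2 ⟨hMo, hdet⟩⟩, by rw [hMa y, hT]⟩
  · set i1 : Fin d := ⟨1, by omega⟩
    set v : Fin d → ℝ := fun i => if i = i1 then (-1:ℝ) else 1 with hv
    have hDo : Matrix.diagonal v ∈ Matrix.orthogonalGroup (Fin d) ℝ := by
      apply diag_orth
      intro i
      by_cases h : i = i1 <;> simp [hv, h]
    have hDdet : (Matrix.diagonal v).det = -1 := by
      rw [Matrix.det_diagonal]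
      rw [Finset.prod_ite_eq' Finset.univ i1 (fun _ => (-1:ℝ))]
      simp
    have hMD : M * Matrix.diagonal v ∈ Matrix.specialOrthogonalGroup (Fin d) ℝ := by
      rw [Matrix.mem_specialOrthogonalGroup_iff]
      constructor
      · exact mul_mem hMo hDo
      · rw [Matrix.det_mul, hdet, hDdet]; norm_num
    refine ⟨⟨M * Matrix.diagonal v, hMD⟩, ?_⟩
    have hDy : Matrix.toEuclideanLin (Matrix.diagonal v) y = y := by
      ext i
      rw [toEuclideanLin_diagonal]
      by_cases h : i = i1
      · rw [h, hy1]; ring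
      · simp [hv, h]
    have hsplit : Matrix.toEuclideanLin (M * Matrix.diagonal v) y
        = Matrix.toEuclideanLin M (Matrix.toEuclideanLin (Matrix.diagonal v) y) := by
      ext i
      rw [Matrix.toEuclideanLin_apply, Matrix.toEuclideanLin_apply, Matrix.toEuclideanLin_apply]
      show ((M * Matrix.diagonal v).mulVec _) i = (M.mulVec ((Matrix.diagonal v).mulVec _)) i
      rw [← Matrix.mulVec_mulVec]
    rw [show ((⟨M * Matrix.diagonal v, hMD⟩ : Matrix.specialOrthogonalGroup (Fin d) ℝ) :
      Matrix (Fin d) (Fin d) ℝ) = M * Matrix.diagonal v from rfl, hsplit, hDy, hMa y, hT]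

lemma exists_so_neg (hd : 2 ≤ d) :
    ∃ R : Matrix.specialOrthogonalGroup (Fin d) ℝ, ∀ ρ : ℝ,
      Matrix.toEuclideanLin (R : Matrix (Fin d) (Fin d) ℝ)
        (ρ • EuclideanSpace.single (⟨0, by omega⟩ : Fin d) (1:ℝ))
      = (-ρ) • EuclideanSpace.single (⟨0, by omega⟩ : Fin d) (1:ℝ) := by
  set i0 : Fin d := ⟨0, by omega⟩
  set i1 : Fin d := ⟨1, by omega⟩
  have hne : i0 ≠ i1 := by simp [i0, i1, Fin.ext_iff]
  set w : Fin d → ℝ :=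
    fun i => (if i = i0 then (-1:ℝ) else 1) * (if i = i1 then (-1:ℝ) else 1) with hw
  have hDo : Matrix.diagonal w ∈ Matrix.orthogonalGroup (Fin d) ℝ := by
    apply diag_orth
    intro i
    by_cases h0 : i = i0 <;> by_cases h1 : i = i1
    · exact absurd (h0.symm.trans h1) hne
    · simp [hw, h0, h1, hne]
    · simp [hw, h0, h1, Ne.symm hne]
    · simp [hw, h0, h1]
  have hDdet : (Matrix.diagonal w).det = 1 := by
    rw [Matrix.det_diagonal, hw, Finset.prod_mul_distrib,
      Finset.prod_ite_eq' Finset.univ i0 (fun _ => (-1:ℝ)),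
      Finset.prod_ite_eq' Finset.univ i1 (fun _ => (-1:ℝ))]
    simp
  have hmem : Matrix.diagonal w ∈ Matrix.specialOrthogonalGroup (Fin d) ℝ :=
    (Matrix.mem_specialOrthogonalGroup_iff).2 ⟨hDo, hDdet⟩
  refine ⟨⟨Matrix.diagonal w, hmem⟩, fun ρ => ?_⟩
  ext i
  rw [show ((⟨Matrix.diagonal w, hmem⟩ : Matrix.specialOrthogonalGroup (Fin d) ℝ) :
    Matrix (Fin d) (Fin d) ℝ) = Matrix.diagonal w from rfl, toEuclideanLin_diagonal]
  rw [PiLp.smul_apply, PiLp.smul_apply]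
  by_cases h0 : i = i0
  · rw [h0]
    simp [hw, hne, EuclideanSpace.single_apply]
  · rw [EuclideanSpace.single_apply]
    simp [h0]

end C

section D
variable {r : ℝ} {u : ℝ → ℂ}

lemma itd_hasDeriv' (hr : 0 < r) (hu : ContDiffOn ℝ (⊤ : ℕ∞) u (Icc (-r) r)) (j : ℕ)
    {x : ℝ} (hx : x ∈ Icc (-r) r) :
    HasDerivWithinAt (iteratedDerivWithin j u (Icc (-r) r))
      (iteratedDerivWithin (j + 1) u (Icc (-r) r) x) (Icc (-r) r) x := by
  have hrr : (-r) < r := by linarith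
  have hdiff : DifferentiableOn ℝ (iteratedDerivWithin j u (Icc (-r) r)) (Icc (-r) r) :=
    hu.differentiableOn_iteratedDerivWithin (by exact_mod_cast lt_top_iff_ne_top.2 (by simp))
      (uniqueDiffOn_Icc hrr)
  have := (hdiff x hx).hasDerivWithinAt
  rwa [← iteratedDerivWithin_succ] at this

lemma itd_neg (hr : 0 < r) (hu : ContDiffOn ℝ (⊤ : ℕ∞) u (Icc (-r) r)) :
    ∀ m : ℕ, ∀ x ∈ Icc (-r) r,
      iteratedDerivWithin m (fun ρ => u (-ρ)) (Icc (-r) r) x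
        = ((-1 : ℝ) ^ m) • iteratedDerivWithin m u (Icc (-r) r) (-x) := by
  have hrr : (-r) < r := by linarith
  have hsym : ∀ x ∈ Icc (-r) r, -x ∈ Icc (-r) r := by
    intro x hx
    constructor <;> [linarith [hx.2]; linarith [hx.1]]
  intro m
  induction m with
  | zero => intro x hx; simp
  | succ m ih =>
    intro x hx
    rw [iteratedDerivWithin_succ]
    have hinner : HasDerivWithinAt (fun ρ => iteratedDerivWithin m u (Icc (-r) r) (-ρ))
        (((-1 : ℝ)) • iteratedDerivWithin (m + 1) u (Icc (-r) r) (-x)) (Icc (-r) r) x := by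
      have hw := itd_hasDeriv' hr hu m (hsym x hx)
      have hneg : HasDerivWithinAt (fun ρ : ℝ => -ρ) (-1) (Icc (-r) r) x :=
        (hasDerivWithinAt_id x _).neg
      exact HasDerivWithinAt.scomp x hw hneg fun y hy => hsym y hy
    have hcongr : derivWithin (iteratedDerivWithin m (fun ρ => u (-ρ)) (Icc (-r) r))
        (Icc (-r) r) x
        = derivWithin (fun ρ => ((-1 : ℝ) ^ m) • iteratedDerivWithin m u (Icc (-r) r) (-ρ))
          (Icc (-r) r) x := by
      apply derivWithin_congr
      · intro y hy; exact ih y hy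
      · exact ih x hx
    rw [hcongr]
    have hd : HasDerivWithinAt
        (fun ρ => ((-1 : ℝ) ^ m) • iteratedDerivWithin m u (Icc (-r) r) (-ρ))
        (((-1 : ℝ) ^ m) • (((-1 : ℝ)) • iteratedDerivWithin (m + 1) u (Icc (-r) r) (-x)))
        (Icc (-r) r) x := hinner.const_smul ((-1 : ℝ) ^ m)
    rw [hd.derivWithin ((uniqueDiffOn_Icc hrr).uniqueDiffWithinAt hx)]
    rw [smul_smul, ← pow_succ]

lemma itd_even_vanish (hr : 0 < r) (hu : ContDiffOn ℝ (⊤ : ℕ∞) u (Icc (-r) r))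
    (hev : ∀ x ∈ Icc (-r) r, u (-x) = u x) (n : ℕ) :
    iteratedDerivWithin (2 * n + 1) u (Icc (-r) r) 0 = 0 := by
  have hrr : (-r) < r := by linarith
  have h0 : (0:ℝ) ∈ Icc (-r) r := by constructor <;> linarith
  have hA := itd_neg hr hu (2 * n + 1) 0 h0
  have hB : iteratedDerivWithin (2 * n + 1) (fun ρ => u (-ρ)) (Icc (-r) r) 0
      = iteratedDerivWithin (2 * n + 1) u (Icc (-r) r) 0 :=
    iteratedDerivWithin_congr (fun y hy => hev y hy) h0
  rw [hB, neg_zero] at hA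
  have hpow : ((-1 : ℝ) ^ (2 * n + 1)) = -1 := by
    rw [pow_succ, pow_mul]
    norm_num
  rw [hpow] at hA
  have : (2 : ℝ) • iteratedDerivWithin (2 * n + 1) u (Icc (-r) r) 0 = 0 := by
    rw [two_smul]
    nth_rewrite 1 [hA]
    simp
  have h2 : (2:ℝ) ≠ 0 := by norm_num
  exact (smul_eq_zero.1 this).resolve_left h2

lemma itd_subset_transfer (hr : 0 < r) (hu : ContDiffOn ℝ (⊤ : ℕ∞) u (Icc (-r) r)) :
    ∀ m : ℕ, ∀ x ∈ Icc (0:ℝ) r,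
      iteratedDerivWithin m u (Icc 0 r) x = iteratedDerivWithin m u (Icc (-r) r) x := by
  have hrr : (-r) < r := by linarith
  have hsub : Icc (0:ℝ) r ⊆ Icc (-r) r := Icc_subset_Icc (by linarith) le_rfl
  intro m
  induction m with
  | zero => intro x hx; simp
  | succ m ih =>
    intro x hx
    rw [iteratedDerivWithin_succ,
      iteratedDerivWithin_succ]
    have hc : derivWithin (iteratedDerivWithin m u (Icc 0 r)) (Icc 0 r) x
        = derivWithin (iteratedDerivWithin m u (Icc (-r) r)) (Icc 0 r) x := by
      apply derivWithin_congr
      · intro y hy; exact ih y hy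
      · exact ih x hx
    rw [hc]
    apply derivWithin_subset hsub ((uniqueDiffOn_Icc hr).uniqueDiffWithinAt hx)
    exact hu.differentiableOn_iteratedDerivWithin
      (by exact_mod_cast lt_top_iff_ne_top.2 (by simp)) (uniqueDiffOn_Icc hrr) x (hsub hx)

end D


/-- `φ` is smooth on the closed ball and radially symmetric iff
`φ(x) = f(|x|)` for some `f ∈ C^∞_ev([0,r])`. -/
theorem smooth_radial_iff_exists_even_profile (d : ℕ) (hd : 2 ≤ d) (r : ℝ) (hr : 0 < r)
    (φ : EuclideanSpace ℝ (Fin d) → ℂ) :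
    (ContDiffOn ℝ (⊤ : ℕ∞) φ (closedBall 0 r) ∧
      ∀ R : Matrix.specialOrthogonalGroup (Fin d) ℝ,
        ∀ x ∈ closedBall (0 : EuclideanSpace ℝ (Fin d)) r,
          φ (Matrix.toEuclideanLin (R : Matrix (Fin d) (Fin d) ℝ) x) = φ x) ↔
      ∃ f : ℝ → ℂ, SmoothEvenOn r f ∧
        ∀ x ∈ closedBall (0 : EuclideanSpace ℝ (Fin d)) r, φ x = f ‖x‖ := by
  constructor
  · rintro ⟨hsm, hrad⟩
    set i0 : Fin d := ⟨0, by omega⟩ with hi0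
    set e0 : EuclideanSpace ℝ (Fin d) := EuclideanSpace.single i0 (1:ℝ) with he0
    have hne0 : ‖e0‖ = 1 := by rw [he0, EuclideanSpace.norm_single]; norm_num
    set f : ℝ → ℂ := fun ρ => φ (ρ • e0) with hfdef
    have hnorm : ∀ ρ : ℝ, ‖ρ • e0‖ = |ρ| := by
      intro ρ; rw [norm_smul, hne0, mul_one, Real.norm_eq_abs]
    have hmapsTo : MapsTo (fun ρ : ℝ => ρ • e0) (Icc (-r) r)
        (closedBall (0 : EuclideanSpace ℝ (Fin d)) r) := by
      intro ρ hρ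
      rw [mem_closedBall_zero_iff, hnorm]
      exact abs_le.2 ⟨hρ.1, hρ.2⟩
    have hsmf : ContDiffOn ℝ (⊤ : ℕ∞) f (Icc (-r) r) := by
      have hc : ContDiff ℝ (⊤ : ℕ∞) (fun ρ : ℝ => ρ • e0) := contDiff_id.smul contDiff_const
      exact hsm.comp hc.contDiffOn hmapsTo
    have hsub : Icc (0:ℝ) r ⊆ Icc (-r) r := Icc_subset_Icc (by linarith) le_rfl
    have hev : ∀ ρ ∈ Icc (-r) r, f (-ρ) = f ρ := by
      obtain ⟨R2, hR2⟩ := exists_so_neg (d := d) hd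
      intro ρ hρ
      have h1 : f (-ρ) = φ ((-ρ) • e0) := rfl
      rw [h1, ← hR2 ρ]
      exact hrad R2 (ρ • e0) (hmapsTo hρ)
    refine ⟨f, ⟨hsmf.mono hsub, ?_⟩, ?_⟩
    · intro n
      rw [itd_subset_transfer hr hsmf (2 * n + 1) 0 ⟨le_rfl, hr.le⟩]
      exact itd_even_vanish hr hsmf hev n
    · intro x hx
      set y : EuclideanSpace ℝ (Fin d) := ‖x‖ • e0 with hy
      have hy1 : y (⟨1, by omega⟩ : Fin d) = 0 := by
        rw [hy, PiLp.smul_apply, he0, EuclideanSpace.single_apply]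
        have : (⟨1, by omega⟩ : Fin d) ≠ i0 := by simp [hi0, Fin.ext_iff]
        rw [if_neg this]
        simp
      have hxy : ‖y‖ = ‖x‖ := by
        rw [hy, hnorm, abs_of_nonneg (norm_nonneg x)]
      obtain ⟨R, hR⟩ := exists_so hd x y hxy hy1
      have hymem : y ∈ closedBall (0 : EuclideanSpace ℝ (Fin d)) r := by
        rw [mem_closedBall_zero_iff, hxy]
        exact mem_closedBall_zero_iff.1 hx
      calc φ x = φ (Matrix.toEuclideanLin (R : Matrix (Fin d) (Fin d) ℝ) y) := by rw [hR]
        _ = φ y := hrad R y hymem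
        _ = f ‖x‖ := rfl
  · rintro ⟨f, hf, heq⟩
    constructor
    · exact (radial_contDiffOn hr f hf).congr fun x hx => heq x hx
    · intro R x hx
      have hRmem : (R : Matrix (Fin d) (Fin d) ℝ) ∈ Matrix.orthogonalGroup (Fin d) ℝ :=
        ((Matrix.mem_specialOrthogonalGroup_iff).1 R.2).1
      have hnormR : ‖Matrix.toEuclideanLin (R : Matrix (Fin d) (Fin d) ℝ) x‖ = ‖x‖ :=
        toEuclideanLin_norm _ hRmem x
      have hmem' : Matrix.toEuclideanLin (R : Matrix (Fin d) (Fin d) ℝ) x ∈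
          closedBall (0 : EuclideanSpace ℝ (Fin d)) r := by
        rw [mem_closedBall_zero_iff, hnormR]
        exact mem_closedBall_zero_iff.1 hx
      rw [heq _ hmem', heq x hx, hnormR]
end
end

section
/- Let d ≥ 2 be an integer and r > 0. For every smooth radially symmetric function φ on the closed ball closure(B^d_r) there exist f ∈ C^∞_ev([0,r]) and g ∈ C^∞([0,r²]) such that φ(x) = f(|x|) and φ(x) = g(|x|²) for all x ∈ closure(B^d_r). -/
open MeasureTheory Metric Set Filter Topology

noncomputable section

namespace RadialAux

/-- Division of `G` by `ρ^m`, extended by the Taylor coefficient at `0`. -/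
def Gdiv (m : ℕ) (G : ℝ → ℝ) : ℝ → ℝ :=
  fun ρ => if ρ = 0 then iteratedDeriv m G 0 / m.factorial else G ρ / ρ ^ m

lemma iteratedDeriv_monomial (m j : ℕ) (c : ℝ) :
    iteratedDeriv j (fun x : ℝ => c * x ^ m)
      = fun x => c * (m.descFactorial j : ℝ) * x ^ (m - j) := by
  induction j with
  | zero => simp
  | succ j ih =>
    rw [iteratedDeriv_succ, ih]
    funext x
    have : HasDerivAt (fun x : ℝ => c * (m.descFactorial j : ℝ) * x ^ (m - j))
        (c * (m.descFactorial j : ℝ) * ((m - j : ℕ) * x ^ (m - j - 1))) x :=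
      (hasDerivAt_pow (m - j) x).const_mul _
    rw [this.deriv, Nat.descFactorial_succ, Nat.sub_sub]
    push_cast
    ring

lemma tendsto_div_pow (m : ℕ) (G : ℝ → ℝ) (hG : ContDiff ℝ (⊤ : ℕ∞) G)
    (h0 : ∀ j < m, iteratedDeriv j G 0 = 0) :
    Tendsto (fun ρ => G ρ / ρ ^ m) (𝓝[≠] (0:ℝ))
      (𝓝 (iteratedDeriv m G 0 / m.factorial)) := by
  induction m generalizing G with
  | zero =>
    simpa using ((hG.continuous.tendsto 0).mono_left nhdsWithin_le_nhds)
  | succ m ih =>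
    have hG' : ContDiff ℝ (⊤ : ℕ∞) (deriv G) := (contDiff_infty_iff_deriv.mp hG).2
    have hdiffG : Differentiable ℝ G := hG.differentiable (by simp)
    have hdiv : Tendsto (fun x : ℝ => deriv G x / ((m + 1 : ℝ) * x ^ m)) (𝓝[≠] (0:ℝ))
        (𝓝 (iteratedDeriv (m+1) G 0 / (m+1).factorial)) := by
      have h1 : Tendsto (fun x : ℝ => deriv G x / x ^ m / (m + 1 : ℝ)) (𝓝[≠] (0:ℝ))
          (𝓝 (iteratedDeriv m (deriv G) 0 / m.factorial / (m + 1 : ℝ))) := by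
        exact (ih (deriv G) hG' (fun j hj => by
          rw [← iteratedDeriv_succ']
          exact h0 (j+1) (by omega))).div_const _
      have heq : iteratedDeriv m (deriv G) 0 / m.factorial / (m + 1 : ℝ)
          = iteratedDeriv (m+1) G 0 / (m+1).factorial := by
        rw [← iteratedDeriv_succ', Nat.factorial_succ]
        have h2 : (m.factorial : ℝ) ≠ 0 := Nat.cast_ne_zero.mpr m.factorial_ne_zero
        push_cast
        rw [div_div, div_eq_div_iff (by positivity) (by positivity)]
        ring
      rw [heq] at h1
      refine h1.congr (fun x => ?_)
      rw [div_div, mul_comm ((m:ℝ)+1) (x ^ m)]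
    refine HasDerivAt.lhopital_zero_nhdsNE
      (f' := deriv G) (g' := fun x => (m + 1 : ℝ) * x ^ m)
      (Eventually.of_forall fun x => (hdiffG x).hasDerivAt)
      (Eventually.of_forall fun x => by simpa using hasDerivAt_pow (m+1) x)
      ?_ ?_ ?_ hdiv
    · refine eventually_mem_nhdsWithin.mono fun x (hx : x ≠ 0) => ?_
      positivity
    · have : G 0 = 0 := by simpa using h0 0 (Nat.succ_pos m)
      simpa [this] using ((hG.continuous.tendsto 0).mono_left nhdsWithin_le_nhds)
    · simpa using (((continuous_pow (m+1)).tendsto (0:ℝ)).mono_left nhdsWithin_le_nhds)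

lemma continuous_Gdiv (m : ℕ) (G : ℝ → ℝ) (hG : ContDiff ℝ (⊤ : ℕ∞) G)
    (h0 : ∀ j < m, iteratedDeriv j G 0 = 0) : Continuous (Gdiv m G) := by
  rw [continuous_iff_continuousAt]
  intro x
  rcases eq_or_ne x 0 with rfl | hx
  · rw [← continuousWithinAt_compl_self]
    have h1 : Tendsto (Gdiv m G) (𝓝[≠] (0:ℝ)) (𝓝 (iteratedDeriv m G 0 / m.factorial)) := by
      refine (tendsto_div_pow m G hG h0).congr' ?_
      filter_upwards [eventually_mem_nhdsWithin] with y (hy : y ≠ 0)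
      simp [Gdiv, hy]
    have : Gdiv m G 0 = iteratedDeriv m G 0 / m.factorial := by simp [Gdiv]
    rw [ContinuousWithinAt, this]
    exact h1
  · have hev : Gdiv m G =ᶠ[𝓝 x] fun ρ => G ρ / ρ ^ m := by
      filter_upwards [isOpen_ne.mem_nhds (show x ≠ 0 from hx)] with y hy
      simp only [Gdiv, if_neg (show ¬ y = 0 from hy)]
    rw [ContinuousAt, hev.self_of_nhds]
    refine Tendsto.congr' hev.symm ?_
    exact ((hG.continuous.tendsto x).div ((continuous_pow m).tendsto x) (pow_ne_zero m hx))

end RadialAux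

namespace RadialAux

/-- The numerator of the derivative of `Gdiv m G`. -/
def Kop (m : ℕ) (G : ℝ → ℝ) : ℝ → ℝ := fun ρ => ρ * deriv G ρ - (m : ℝ) * G ρ

lemma contDiff_Kop (m : ℕ) (G : ℝ → ℝ) (hG : ContDiff ℝ (⊤ : ℕ∞) G) :
    ContDiff ℝ (⊤ : ℕ∞) (Kop m G) := by
  have hG' : ContDiff ℝ (⊤ : ℕ∞) (deriv G) := (contDiff_infty_iff_deriv.mp hG).2
  exact (contDiff_id.mul hG').sub (contDiff_const.mul hG)

lemma iteratedDeriv_Kop (m : ℕ) (G : ℝ → ℝ) (hG : ContDiff ℝ (⊤ : ℕ∞) G) (j : ℕ) :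
    iteratedDeriv j (Kop m G)
      = fun ρ => ρ * iteratedDeriv (j+1) G ρ + ((j : ℝ) - m) * iteratedDeriv j G ρ := by
  have hd : ∀ k : ℕ, Differentiable ℝ (iteratedDeriv k G) := by
    intro k
    rw [iteratedDeriv_eq_iterate]
    exact (hG.iterate_deriv k).differentiable (by simp)
  have hdd : ∀ k : ℕ, ∀ x : ℝ, HasDerivAt (iteratedDeriv k G) (iteratedDeriv (k+1) G x) x := by
    intro k x
    rw [iteratedDeriv_succ]
    exact (hd k x).hasDerivAt
  induction j with
  | zero =>
    funext ρ
    simp [Kop, iteratedDeriv_one]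
    ring
  | succ j ih =>
    rw [iteratedDeriv_succ, ih]
    funext ρ
    have h1 : HasDerivAt (fun ρ : ℝ => ρ * iteratedDeriv (j+1) G ρ + ((j : ℝ) - m) * iteratedDeriv j G ρ)
        ((1 * iteratedDeriv (j+1) G ρ + ρ * iteratedDeriv (j+2) G ρ)
          + ((j : ℝ) - m) * iteratedDeriv (j+1) G ρ) ρ := by
      exact ((hasDerivAt_id ρ).mul (hdd (j+1) ρ)).add ((hdd j ρ).const_mul _)
    rw [h1.deriv]
    push_cast
    ring

lemma hasDerivAt_Gdiv (m : ℕ) (G : ℝ → ℝ) (hG : ContDiff ℝ (⊤ : ℕ∞) G)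
    (h0 : ∀ j < m, iteratedDeriv j G 0 = 0) (x : ℝ) :
    HasDerivAt (Gdiv m G) (Gdiv (m+1) (Kop m G) x) x := by
  have hdiffG : Differentiable ℝ G := hG.differentiable (by simp)
  rcases eq_or_ne x 0 with rfl | hx
  · -- at zero, via slope
    set c : ℝ := iteratedDeriv m G 0 / m.factorial with hc
    have hfac : (m.factorial : ℝ) ≠ 0 := Nat.cast_ne_zero.mpr m.factorial_ne_zero
    set Gt : ℝ → ℝ := fun ρ => G ρ - c * ρ ^ m with hGt
    have hGtsm : ContDiff ℝ (⊤ : ℕ∞) Gt :=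
      hG.sub (contDiff_const.mul (contDiff_id.pow m))
    have hmono : ∀ j : ℕ, iteratedDeriv j (fun ρ : ℝ => c * ρ ^ m) 0
        = c * (m.descFactorial j : ℝ) * (0:ℝ) ^ (m - j) := by
      intro j; rw [iteratedDeriv_monomial]
    have hGt0 : ∀ j < m + 1, iteratedDeriv j Gt 0 = 0 := by
      intro j hj
      have hsub : iteratedDeriv j Gt 0
          = iteratedDeriv j G 0 - iteratedDeriv j (fun ρ : ℝ => c * ρ ^ m) 0 := by
        have := iteratedDerivWithin_sub (mem_univ (0:ℝ)) uniqueDiffOn_univ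
          (f := G) (g := fun ρ : ℝ => c * ρ ^ m) (n := j)
          (hG.of_le (by exact_mod_cast le_top)).contDiffWithinAt
          ((contDiff_const.mul (contDiff_id.pow m)).of_le (by exact_mod_cast le_top)).contDiffWithinAt
        rw [show Gt = G - fun ρ : ℝ => c * ρ ^ m from rfl]
        simpa [iteratedDerivWithin_univ] using this
      rcases lt_or_eq_of_le (Nat.lt_succ_iff.mp hj) with hjm | rfl
      · rw [hsub, h0 j hjm, hmono j, zero_pow (by omega)]
        ring
      · rw [hsub, hmono j, Nat.sub_self, pow_zero, Nat.descFactorial_self]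
        rw [hc]
        field_simp
        simp
    have hlim : Tendsto (fun ρ => Gt ρ / ρ ^ (m+1)) (𝓝[≠] (0:ℝ))
        (𝓝 (iteratedDeriv (m+1) Gt 0 / (m+1).factorial)) :=
      tendsto_div_pow (m+1) Gt hGtsm hGt0
    have hval : iteratedDeriv (m+1) Gt 0 = iteratedDeriv (m+1) (Kop m G) 0 := by
      have hsub : iteratedDeriv (m+1) Gt 0
          = iteratedDeriv (m+1) G 0 - iteratedDeriv (m+1) (fun ρ : ℝ => c * ρ ^ m) 0 := by
        have := iteratedDerivWithin_sub (mem_univ (0:ℝ)) uniqueDiffOn_univ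
          (f := G) (g := fun ρ : ℝ => c * ρ ^ m) (n := m+1)
          (hG.of_le (by exact_mod_cast le_top)).contDiffWithinAt
          ((contDiff_const.mul (contDiff_id.pow m)).of_le (by exact_mod_cast le_top)).contDiffWithinAt
        rw [show Gt = G - fun ρ : ℝ => c * ρ ^ m from rfl]
        simpa [iteratedDerivWithin_univ] using this
      rw [hsub, hmono (m+1), iteratedDeriv_Kop m G hG (m+1)]
      rw [Nat.descFactorial_eq_zero_iff_lt.mpr (Nat.lt_succ_self m)]
      push_cast
      ring
    rw [hasDerivAt_iff_tendsto_slope]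
    have hGdiv0 : Gdiv m G 0 = c := by simp [Gdiv, hc]
    have hslope : slope (Gdiv m G) 0 =ᶠ[𝓝[≠] (0:ℝ)] fun ρ => Gt ρ / ρ ^ (m+1) := by
      filter_upwards [eventually_mem_nhdsWithin] with ρ (hρ : ρ ≠ 0)
      rw [slope_def_field, hGdiv0, Gdiv, if_neg hρ, hGt]
      field_simp
      ring
    refine Tendsto.congr' hslope.symm ?_
    have : Gdiv (m+1) (Kop m G) 0 = iteratedDeriv (m+1) Gt 0 / (m+1).factorial := by
      simp [Gdiv, hval]
    rw [this]
    exact hlim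
  · -- away from zero
    have hev : (fun ρ => G ρ / ρ ^ m) =ᶠ[𝓝 x] Gdiv m G := by
      filter_upwards [isOpen_ne.mem_nhds (show x ≠ 0 from hx)] with y hy
      simp only [Gdiv, if_neg (show ¬ y = 0 from hy)]
    have h1 : HasDerivAt (fun ρ => G ρ / ρ ^ m)
        ((deriv G x * x ^ m - G x * ((m:ℝ) * x ^ (m-1))) / (x ^ m) ^ 2) x :=
      (hdiffG x).hasDerivAt.div (hasDerivAt_pow m x) (pow_ne_zero m hx)
    have hveq : (deriv G x * x ^ m - G x * ((m:ℝ) * x ^ (m-1))) / (x ^ m) ^ 2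
        = Gdiv (m+1) (Kop m G) x := by
      rw [Gdiv, if_neg hx, Kop]
      rcases Nat.eq_zero_or_pos m with rfl | hm
      · simp only [pow_zero, Nat.cast_zero, zero_mul, mul_zero, sub_zero, mul_one, one_pow,
          div_one, zero_add, pow_one]
        rw [eq_div_iff hx]
        ring
      · obtain ⟨k, rfl⟩ := Nat.exists_eq_succ_of_ne_zero (Nat.pos_iff_ne_zero.mp hm)
        have hxk : x ^ k ≠ 0 := pow_ne_zero k hx
        field_simp
        simp only [Nat.succ_sub_one, Nat.succ_eq_add_one]
        ring
    rw [hveq] at h1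
    exact h1.congr_of_eventuallyEq hev.symm

end RadialAux

namespace RadialAux

lemma Kop_zeros (m : ℕ) (G : ℝ → ℝ) (hG : ContDiff ℝ (⊤ : ℕ∞) G)
    (h0 : ∀ j < m, iteratedDeriv j G 0 = 0) :
    ∀ j < m + 1, iteratedDeriv j (Kop m G) 0 = 0 := by
  intro j hj
  rw [iteratedDeriv_Kop m G hG j]
  rcases lt_or_eq_of_le (Nat.lt_succ_iff.mp hj) with hjm | rfl
  · have := h0 j hjm
    simp [this]
  · simp

lemma contDiff_Gdiv (n : ℕ) : ∀ (m : ℕ) (G : ℝ → ℝ), ContDiff ℝ (⊤ : ℕ∞) G →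
    (∀ j < m, iteratedDeriv j G 0 = 0) → ContDiff ℝ (n : ℕ) (Gdiv m G) := by
  induction n with
  | zero =>
    intro m G hG h0
    rw [show ((0 : ℕ) : WithTop ℕ∞) = 0 from rfl, contDiff_zero]
    exact continuous_Gdiv m G hG h0
  | succ n ih =>
    intro m G hG h0
    have hder : deriv (Gdiv m G) = Gdiv (m+1) (Kop m G) :=
      funext fun x => (hasDerivAt_Gdiv m G hG h0 x).deriv
    rw [show ((n + 1 : ℕ) : WithTop ℕ∞) = (n : WithTop ℕ∞) + 1 by push_cast; rfl,
      contDiff_succ_iff_deriv]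
    refine ⟨fun x => (hasDerivAt_Gdiv m G hG h0 x).differentiableAt, ?_, ?_⟩
    · intro h
      exfalso
      exact (WithTop.natCast_ne_top n) (by exact_mod_cast h)
    · rw [hder]
      exact ih (m+1) (Kop m G) (contDiff_Kop m G hG) (Kop_zeros m G hG h0)

lemma contDiff_top_Gdiv (m : ℕ) (G : ℝ → ℝ) (hG : ContDiff ℝ (⊤ : ℕ∞) G)
    (h0 : ∀ j < m, iteratedDeriv j G 0 = 0) : ContDiff ℝ (⊤ : ℕ∞) (Gdiv m G) := by
  rw [show ((⊤ : ℕ∞) : WithTop ℕ∞) = (⊤ : ℕ∞) from rfl]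
  exact contDiff_infty.mpr fun n => contDiff_Gdiv n m G hG h0

lemma deriv_odd (G : ℝ → ℝ) (heven : ∀ x, G (-x) = G x) (x : ℝ) :
    deriv G (-x) = - deriv G x := by
  have hfun : (fun y => G (-y)) = G := funext heven
  have h1 : deriv (fun y => G (-y)) x = - deriv G (-x) := deriv_comp_neg G x
  rw [hfun] at h1
  linarith

/-- Evenness gives the key vanishing of the first derivative. -/
lemma deriv_even_zero (G : ℝ → ℝ) (heven : ∀ x, G (-x) = G x) :
    ∀ j < 1, iteratedDeriv j (deriv G) 0 = 0 := by
  intro j hj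
  interval_cases j
  have := deriv_odd G heven 0
  rw [neg_zero] at this
  simp only [iteratedDeriv_zero]
  linarith

lemma Gdiv_deriv_even (G : ℝ → ℝ) (heven : ∀ x, G (-x) = G x) (x : ℝ) :
    Gdiv 1 (deriv G) (-x) = Gdiv 1 (deriv G) x := by
  rcases eq_or_ne x 0 with rfl | hx
  · norm_num
  · rw [Gdiv, Gdiv, if_neg (neg_ne_zero.mpr hx), if_neg hx, deriv_odd G heven x]
    rw [pow_one, pow_one, neg_div_neg_eq]

end RadialAux

namespace RadialAux

lemma contDiffOn_nat_comp_sqrt (n : ℕ) : ∀ (F : ℝ → ℝ), ContDiff ℝ (⊤ : ℕ∞) F →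
    (∀ x, F (-x) = F x) →
    ContDiffOn ℝ (n : ℕ) (fun t => F (Real.sqrt t)) (Ici (0:ℝ)) := by
  induction n with
  | zero =>
    intro F hF _
    rw [show ((0 : ℕ) : WithTop ℕ∞) = 0 from rfl, contDiffOn_zero]
    exact (hF.continuous.comp Real.continuous_sqrt).continuousOn
  | succ n ih =>
    intro F hF heven
    set F₁ : ℝ → ℝ := fun ρ => (1/2 : ℝ) * Gdiv 1 (deriv F) ρ with hF₁def
    have hFd : ContDiff ℝ (⊤ : ℕ∞) (deriv F) := (contDiff_infty_iff_deriv.mp hF).2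
    have hDsm : ContDiff ℝ (⊤ : ℕ∞) (Gdiv 1 (deriv F)) :=
      contDiff_top_Gdiv 1 (deriv F) hFd (deriv_even_zero F heven)
    have hF₁sm : ContDiff ℝ (⊤ : ℕ∞) F₁ := contDiff_const.mul hDsm
    have hF₁even : ∀ x, F₁ (-x) = F₁ x := fun x => by
      rw [hF₁def]
      simp only []
      rw [Gdiv_deriv_even F heven x]
    have hdiffF : Differentiable ℝ F := hF.differentiable (by simp)
    -- derivative of the composition at positive points
    have hpos : ∀ t : ℝ, 0 < t →
        HasDerivAt (fun t => F (Real.sqrt t)) (F₁ (Real.sqrt t)) t := by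
      intro t ht
      have hst : Real.sqrt t ≠ 0 := by positivity
      have h1 : HasDerivAt (fun t => F (Real.sqrt t))
          (deriv F (Real.sqrt t) * (1 / (2 * Real.sqrt t))) t :=
        (hdiffF (Real.sqrt t)).hasDerivAt.comp t (Real.hasDerivAt_sqrt (ne_of_gt ht))
      have h2 : deriv F (Real.sqrt t) * (1 / (2 * Real.sqrt t)) = F₁ (Real.sqrt t) := by
        rw [hF₁def]
        simp only [Gdiv, if_neg hst, pow_one]
        field_simp
      rwa [h2] at h1
    -- derivative at 0 from the right
    have hcont : Continuous fun t => F (Real.sqrt t) :=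
      hF.continuous.comp Real.continuous_sqrt
    have hlim : Tendsto (fun t => deriv (fun t => F (Real.sqrt t)) t) (𝓝[>] (0:ℝ))
        (𝓝 (F₁ 0)) := by
      have hF₁c : Continuous fun t => F₁ (Real.sqrt t) :=
        hF₁sm.continuous.comp Real.continuous_sqrt
      have h3 : Tendsto (fun t => F₁ (Real.sqrt t)) (𝓝[>] (0:ℝ)) (𝓝 (F₁ 0)) := by
        have := (hF₁c.tendsto 0).mono_left (nhdsWithin_le_nhds (s := Ioi (0:ℝ)))
        simpa using this
      refine h3.congr' ?_
      filter_upwards [self_mem_nhdsWithin] with t (ht : 0 < t)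
      exact ((hpos t ht).deriv).symm
    have h0 : HasDerivWithinAt (fun t => F (Real.sqrt t)) (F₁ 0) (Ici 0) 0 := by
      refine hasDerivWithinAt_Ici_of_tendsto_deriv (s := Ioi (0:ℝ)) ?_
        hcont.continuousWithinAt self_mem_nhdsWithin hlim
      exact fun t ht => ((hpos t ht).differentiableAt).differentiableWithinAt
    have hderivWithin : ∀ t ∈ Ici (0:ℝ),
        derivWithin (fun t => F (Real.sqrt t)) (Ici (0:ℝ)) t = F₁ (Real.sqrt t) := by
      intro t ht
      rcases eq_or_lt_of_le (mem_Ici.mp ht) with rfl | htpos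
      · rw [h0.derivWithin (uniqueDiffOn_Ici 0 0 self_mem_Ici), Real.sqrt_zero]
      · exact ((hpos t htpos).hasDerivWithinAt).derivWithin
          (uniqueDiffOn_Ici 0 t (le_of_lt htpos))
    rw [show ((n + 1 : ℕ) : WithTop ℕ∞) = (n : WithTop ℕ∞) + 1 by push_cast; rfl,
      contDiffOn_succ_iff_derivWithin (uniqueDiffOn_Ici 0)]
    refine ⟨?_, ?_, ?_⟩
    · intro t ht
      rcases eq_or_lt_of_le (mem_Ici.mp ht) with rfl | htpos
      · exact h0.differentiableWithinAt
      · exact ((hpos t htpos).differentiableAt).differentiableWithinAt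
    · intro h
      exact absurd (by exact_mod_cast h) (WithTop.natCast_ne_top n)
    · exact (ih F₁ hF₁sm hF₁even).congr hderivWithin

lemma contDiffOn_comp_sqrt (F : ℝ → ℝ) (hF : ContDiff ℝ (⊤ : ℕ∞) F)
    (heven : ∀ x, F (-x) = F x) :
    ContDiffOn ℝ (⊤ : ℕ∞) (fun t => F (Real.sqrt t)) (Ici (0:ℝ)) := by
  rw [show ((⊤ : ℕ∞) : WithTop ℕ∞) = (⊤ : ℕ∞) from rfl]
  exact contDiffOn_infty.mpr fun n => contDiffOn_nat_comp_sqrt n F hF heven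

end RadialAux

namespace RadialAux

open scoped RealInnerProductSpace

lemma exists_so_matrix (d : ℕ) (i0 i1 : Fin d) (hne : i0 ≠ i1)
    (u : EuclideanSpace ℝ (Fin d)) (hu : ‖u‖ = 1) :
    ∃ N : Matrix (Fin d) (Fin d) ℝ, N ∈ Matrix.specialOrthogonalGroup (Fin d) ℝ ∧
      Matrix.toEuclideanLin N (EuclideanSpace.single i0 (1:ℝ)) = u := by
  -- an orthonormal basis whose `i0`-th vector is `u`
  have horth : Orthonormal ℝ (Set.restrict {i0} (fun _ : Fin d => u)) := by
    constructor
    · intro i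
      exact hu
    · intro i j hij
      exact absurd (Subsingleton.elim i j) hij
  obtain ⟨b, hb⟩ := horth.exists_orthonormalBasis_extension_of_card_eq
    (by simp [finrank_euclideanSpace])
  have hbu : b i0 = u := hb i0 rfl
  set M : Matrix (Fin d) (Fin d) ℝ := Matrix.of fun i j => b j i with hM
  have hMo : star M * M = 1 := by
    ext i j
    have hinner := orthonormal_iff_ite.mp b.orthonormal i j
    rw [PiLp.inner_apply] at hinner
    simp only [RCLike.inner_apply, starRingEnd_apply, star_trivial] at hinner
    rw [Matrix.mul_apply, Matrix.one_apply]
    rw [Matrix.star_eq_conjTranspose]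
    simp only [Matrix.conjTranspose_apply, star_trivial, hM, Matrix.of_apply]
    rw [← hinner]
    exact Finset.sum_congr rfl fun _ _ => mul_comm _ _
  have hdet : M.det * M.det = 1 := by
    have h1 := congrArg Matrix.det hMo
    rwa [Matrix.det_mul, Matrix.det_one, Matrix.star_eq_conjTranspose,
      Matrix.det_conjTranspose, star_trivial] at h1
  set D : Matrix (Fin d) (Fin d) ℝ := Matrix.diagonal (fun j => if j = i1 then M.det else 1)
    with hD
  have hstarD : star D = D := by
    rw [Matrix.star_eq_conjTranspose, hD, Matrix.diagonal_conjTranspose]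
    congr 1
  have hDD : D * D = 1 := by
    have hfun : (fun j : Fin d => (if j = i1 then M.det else 1)
        * (if j = i1 then M.det else 1)) = fun _ : Fin d => (1:ℝ) := by
      funext j
      by_cases hj : j = i1 <;> simp [hj, hdet]
    rw [hD, Matrix.diagonal_mul_diagonal, hfun, Matrix.diagonal_one]
  set N : Matrix (Fin d) (Fin d) ℝ := M * D with hN
  have hNo : star N * N = 1 := by
    rw [hN, star_mul, mul_assoc, ← mul_assoc (star M), hMo, one_mul, hstarD, hDD]
  have hdetD : D.det = M.det := by
    rw [hD, Matrix.det_diagonal]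
    rw [Finset.prod_ite_eq' Finset.univ i1 (fun _ => M.det)]
    simp
  have hdetN : N.det = 1 := by
    rw [hN, Matrix.det_mul, hdetD, hdet]
  refine ⟨N, Matrix.mem_specialOrthogonalGroup_iff.mpr
    ⟨(Matrix.mem_orthogonalGroup_iff' _ _).mpr hNo, hdetN⟩, ?_⟩
  -- compute the image of `e₁`
  apply (WithLp.equiv 2 (Fin d → ℝ)).injective
  show N.mulVec (WithLp.equiv 2 (Fin d → ℝ) (EuclideanSpace.single i0 (1:ℝ))) = WithLp.equiv 2 (Fin d → ℝ) u
  funext i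
  have hsingle : WithLp.equiv 2 (Fin d → ℝ) (EuclideanSpace.single i0 (1:ℝ)) = Pi.single i0 1 := rfl
  rw [hsingle]
  have hNi : N i i0 = u i := by
    rw [hN, Matrix.mul_apply]
    have hterm : ∀ k : Fin d, M i k * D k i0 = if k = i0 then b i0 i else 0 := by
      intro k
      rw [hD, Matrix.diagonal_apply]
      by_cases hk : k = i0
      · subst hk
        simp [if_neg hne, hM]
      · simp [hk]
    rw [Finset.sum_congr rfl fun k _ => hterm k, Finset.sum_ite_eq' Finset.univ i0]
    simp [hbu]
  calc (N.mulVec (Pi.single i0 1)) i = N i i0 * 1 := by rw [Matrix.mulVec_single]; simp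
    _ = u i := by rw [mul_one, hNi]

end RadialAux


/-- every smooth radially symmetric `φ` on the closed ball has radial
profiles `f ∈ C^∞_ev([0,r])` and `g ∈ C^∞([0,r²])` with `φ(x) = f(|x|) = g(|x|²)`. -/
theorem smooth_radial_exists_profiles (d : ℕ) (hd : 2 ≤ d) (r : ℝ) (hr : 0 < r)
    (φ : EuclideanSpace ℝ (Fin d) → ℂ)
    (hφ : ContDiffOn ℝ (⊤ : ℕ∞) φ (closedBall 0 r))
    (hrad : ∀ R : Matrix.specialOrthogonalGroup (Fin d) ℝ,
      ∀ x ∈ closedBall (0 : EuclideanSpace ℝ (Fin d)) r,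
        φ (Matrix.toEuclideanLin (R : Matrix (Fin d) (Fin d) ℝ) x) = φ x) :
    ∃ (f : ℝ → ℂ) (g : ℝ → ℂ), SmoothEvenOn r f ∧
      ContDiffOn ℝ (⊤ : ℕ∞) g (Icc 0 (r ^ 2)) ∧
      ∀ x ∈ closedBall (0 : EuclideanSpace ℝ (Fin d)) r,
        φ x = f ‖x‖ ∧ φ x = g (‖x‖ ^ 2) := by
  have h0d : 0 < d := by omega
  have h1d : 1 < d := by omega
  set i0 : Fin d := ⟨0, h0d⟩ with hi0def
  set i1 : Fin d := ⟨1, h1d⟩ with hi1def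
  have hne : i0 ≠ i1 := by simp [hi0def, hi1def, Fin.ext_iff]
  set e₁ : EuclideanSpace ℝ (Fin d) := EuclideanSpace.single i0 (1:ℝ) with he₁def
  have he₁ : ‖e₁‖ = 1 := by rw [he₁def, EuclideanSpace.norm_single]; norm_num
  have hsmul_norm : ∀ ρ : ℝ, ‖ρ • e₁‖ = |ρ| := fun ρ => by
    rw [norm_smul, he₁, mul_one, Real.norm_eq_abs]
  have hmem : ∀ ρ : ℝ, |ρ| ≤ r →
      ρ • e₁ ∈ closedBall (0:EuclideanSpace ℝ (Fin d)) r := by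
    intro ρ hρ
    rw [mem_closedBall_zero_iff, hsmul_norm]
    exact hρ
  -- key transitivity property
  have key : ∀ x ∈ closedBall (0:EuclideanSpace ℝ (Fin d)) r, φ x = φ (‖x‖ • e₁) := by
    intro x hx
    rcases eq_or_ne x 0 with rfl | hx0
    · rw [norm_zero, zero_smul]
    · have hnx : ‖x‖ ≠ 0 := norm_ne_zero_iff.mpr hx0
      obtain ⟨N, hN, hNe⟩ := RadialAux.exists_so_matrix d i0 i1 hne (‖x‖⁻¹ • x)
        (by rw [norm_smul, norm_inv, norm_norm, inv_mul_cancel₀ hnx])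
      have hxmem : ‖x‖ • e₁ ∈ closedBall (0:EuclideanSpace ℝ (Fin d)) r := by
        apply hmem
        rw [abs_of_nonneg (norm_nonneg x)]
        exact mem_closedBall_zero_iff.mp hx
      have h2 := hrad ⟨N, hN⟩ (‖x‖ • e₁) hxmem
      have himg : Matrix.toEuclideanLin N (‖x‖ • e₁) = x := by
        rw [he₁def, _root_.map_smul, hNe, smul_smul, mul_inv_cancel₀ hnx, one_smul]
      rw [show ((⟨N, hN⟩ : Matrix.specialOrthogonalGroup (Fin d) ℝ) :
        Matrix (Fin d) (Fin d) ℝ) = N from rfl, himg] at h2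
      exact h2
  -- the radial profile
  set F : ℝ → ℂ := fun ρ => φ (ρ • e₁) with hFdef
  have hFsm : ContDiffOn ℝ (⊤ : ℕ∞) F (Icc (-r) r) := by
    refine hφ.comp ((contDiff_id.smul contDiff_const).contDiffOn) ?_
    intro ρ hρ
    exact hmem ρ (abs_le.mpr ⟨hρ.1, hρ.2⟩)
  have hFeven : ∀ ρ : ℝ, |ρ| ≤ r → F (-ρ) = F ρ := by
    intro ρ hρ
    have h1 := key ((-ρ) • e₁) (hmem _ (by rwa [abs_neg]))
    have h2 := key (ρ • e₁) (hmem _ hρ)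
    rw [hFdef]
    simp only []
    rw [h1, h2, hsmul_norm, hsmul_norm, abs_neg]
  -- global smooth even cutoff version of F
  set c : ContDiffBump (0:ℝ) :=
    { rIn := r/2, rOut := 3*r/4, rIn_pos := by linarith, rIn_lt_rOut := by linarith } with hcdef
  set G : ℝ → ℂ := fun ρ => (c ρ : ℝ) • F ρ with hGdef
  have hGF : ∀ ρ : ℝ, |ρ| ≤ r/2 → G ρ = F ρ := by
    intro ρ hρ
    have h1 : c ρ = 1 := c.one_of_mem_closedBall (by
      rw [mem_closedBall_zero_iff]; exact hρ)
    rw [hGdef]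
    simp only [h1, one_smul]
  have hGzero : ∀ ρ : ℝ, 3*r/4 ≤ |ρ| → G ρ = 0 := by
    intro ρ hρ
    have h1 : c ρ = 0 := c.zero_of_le_dist (by
      rw [Real.dist_eq, sub_zero]; exact hρ)
    rw [hGdef]
    simp only [h1, zero_smul]
  have hGsm : ContDiff ℝ (⊤ : ℕ∞) G := by
    rw [contDiff_iff_contDiffAt]
    intro ρ
    by_cases hρ : |ρ| < r
    · have habs := abs_lt.mp hρ
      have hFat : ContDiffAt ℝ (⊤ : ℕ∞) F ρ :=
        (hFsm ρ ⟨habs.1.le, habs.2.le⟩).contDiffAt (Icc_mem_nhds habs.1 habs.2)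
      exact c.contDiffAt.smul hFat
    · push_neg at hρ
      refine contDiffAt_const (c := (0:ℂ)) |>.congr_of_eventuallyEq ?_
      filter_upwards [Metric.ball_mem_nhds ρ (show 0 < r/4 by linarith)] with y hy
      apply hGzero
      have h1 : |y - ρ| < r/4 := by
        rw [← Real.dist_eq]; exact mem_ball.mp hy
      have h2 : |ρ| - |ρ - y| ≤ |y| := by
        have := abs_sub_abs_le_abs_sub ρ y
        linarith
      rw [abs_sub_comm] at h2
      linarith
  have hGeven : ∀ ρ : ℝ, G (-ρ) = G ρ := by
    intro ρ
    by_cases hρ : |ρ| ≤ r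
    · rw [hGdef]
      simp only []
      rw [c.neg, hFeven ρ hρ]
    · push_neg at hρ
      rw [hGzero ρ (by linarith), hGzero (-ρ) (by rw [abs_neg]; linarith)]
  -- odd derivatives vanish
  have hodd : ∀ n : ℕ, iteratedDerivWithin (2 * n + 1) F (Icc 0 r) 0 = 0 := by
    intro n
    have hF0G : F =ᶠ[𝓝[Icc 0 r] (0:ℝ)] G := by
      filter_upwards [inter_mem_nhdsWithin (Icc 0 r)
        (Metric.ball_mem_nhds (0:ℝ) (show 0 < r/2 by linarith))] with y hy
      have : |y| ≤ r/2 := by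
        have := mem_ball_zero_iff.mp hy.2
        rw [Real.norm_eq_abs] at this
        linarith
      exact (hGF y this).symm
    have hF0G0 : F 0 = G 0 := (hGF 0 (by simp; linarith)).symm
    have h1 : iteratedDerivWithin (2*n+1) F (Icc 0 r) 0
        = iteratedDerivWithin (2*n+1) G (Icc 0 r) 0 := by
      rw [iteratedDerivWithin_eq_iteratedFDerivWithin,
        iteratedDerivWithin_eq_iteratedFDerivWithin]
      rw [hF0G.iteratedFDerivWithin_eq hF0G0 (2*n+1)]
    have h2 : iteratedDerivWithin (2*n+1) G (Icc 0 r) 0 = iteratedDeriv (2*n+1) G 0 := by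
      rw [iteratedDerivWithin_eq_iteratedFDerivWithin, iteratedDeriv_eq_iteratedFDeriv]
      have hT : HasFTaylorSeriesUpToOn ((2*n+1 : ℕ) : ℕ∞) G (ftaylorSeries ℝ G) (Icc 0 r) :=
        (hasFTaylorSeriesUpToOn_univ_iff.mpr
          (contDiff_iff_ftaylorSeries.mp (hGsm.of_le (by exact_mod_cast le_top)))).mono
          (subset_univ _)
      rw [← hT.eq_iteratedFDerivWithin_of_uniqueDiffOn le_rfl (uniqueDiffOn_Icc hr)
        (left_mem_Icc.mpr hr.le)]
      rfl
    have h3 : iteratedDeriv (2*n+1) G 0 = - iteratedDeriv (2*n+1) G 0 := by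
      have hGneg : (fun x => G (-x)) = G := funext hGeven
      have h4 := iteratedDeriv_comp_neg (2*n+1) G 0
      rw [hGneg, neg_zero] at h4
      rw [Odd.neg_one_pow ⟨n, by ring⟩, neg_one_smul] at h4
      exact h4
    rw [h1, h2]
    exact add_self_eq_zero.mp (eq_neg_iff_add_eq_zero.mp h3)
  -- the profile in |x|^2
  set g : ℝ → ℂ := fun t => F (Real.sqrt t) with hgdef
  have hsqrt_mapsto : MapsTo Real.sqrt (Icc 0 (r^2)) (Icc (-r) r) := by
    intro s hs
    constructor
    · linarith [Real.sqrt_nonneg s]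
    · rw [← Real.sqrt_sq hr.le]
      exact Real.sqrt_le_sqrt hs.2
  have hg : ContDiffOn ℝ (⊤ : ℕ∞) g (Icc 0 (r^2)) := by
    intro t ht
    rcases eq_or_lt_of_le ht.1 with rfl | htpos
    · -- at 0, use the even extension
      set Gre : ℝ → ℝ := fun ρ => (G ρ).re with hGredef
      set Gim : ℝ → ℝ := fun ρ => (G ρ).im with hGimdef
      have hGre : ContDiff ℝ (⊤ : ℕ∞) Gre := Complex.reCLM.contDiff.comp hGsm
      have hGim : ContDiff ℝ (⊤ : ℕ∞) Gim := Complex.imCLM.contDiff.comp hGsm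
      have hGreEven : ∀ x, Gre (-x) = Gre x := fun x => congrArg Complex.re (hGeven x)
      have hGimEven : ∀ x, Gim (-x) = Gim x := fun x => congrArg Complex.im (hGeven x)
      have hre := RadialAux.contDiffOn_comp_sqrt Gre hGre hGreEven
      have him := RadialAux.contDiffOn_comp_sqrt Gim hGim hGimEven
      have hsum : ContDiffOn ℝ (⊤ : ℕ∞)
          (fun t => ((Gre (Real.sqrt t) : ℝ) : ℂ) + (Gim (Real.sqrt t) : ℂ) * Complex.I)
          (Ici 0) :=
        (Complex.ofRealCLM.contDiff.comp_contDiffOn hre).add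
          ((Complex.ofRealCLM.contDiff.comp_contDiffOn him).mul contDiffOn_const)
      have hGcomp : ContDiffOn ℝ (⊤ : ℕ∞) (fun t => G (Real.sqrt t)) (Ici 0) := by
        refine hsum.congr ?_
        intro y _
        exact (Complex.re_add_im (G (Real.sqrt y))).symm
      have h0 : ContDiffWithinAt ℝ (⊤ : ℕ∞) (fun t => G (Real.sqrt t)) (Icc 0 (r^2)) 0 :=
        (hGcomp 0 (mem_Ici.mpr le_rfl)).mono (fun s hs => hs.1)
      refine h0.congr_of_eventuallyEq ?_ ?_
      · filter_upwards [inter_mem_nhdsWithin (Icc 0 (r^2))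
          (Metric.ball_mem_nhds (0:ℝ) (show 0 < (r/2)^2 by positivity))] with y hy
        have hy2 : y < (r/2)^2 := by
          have := mem_ball_zero_iff.mp hy.2
          rw [Real.norm_eq_abs] at this
          exact lt_of_abs_lt this
        have h5 : Real.sqrt y ≤ r/2 := by
          rw [show r/2 = Real.sqrt ((r/2)^2) from (Real.sqrt_sq (by linarith)).symm]
          exact Real.sqrt_le_sqrt hy2.le
        have h6 : |Real.sqrt y| ≤ r/2 := by
          rw [abs_of_nonneg (Real.sqrt_nonneg y)]
          exact h5
        exact (hGF (Real.sqrt y) h6).symm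
      · rw [hgdef]
        simp only [Real.sqrt_zero]
        exact (hGF 0 (by simp; linarith)).symm
    · -- at positive points, direct composition
      refine ContDiffWithinAt.comp (g := F) (f := Real.sqrt) t
        (hFsm (Real.sqrt t) (hsqrt_mapsto ht))
        ((Real.contDiffAt_sqrt (ne_of_gt htpos)).contDiffWithinAt) hsqrt_mapsto
  refine ⟨F, g, ⟨hFsm.mono (Icc_subset_Icc (by linarith) le_rfl), hodd⟩, hg, ?_⟩
  intro x hx
  have hkey := key x hx
  constructor
  · exact hkey
  · rw [hkey, hgdef]
    simp only []
    rw [Real.sqrt_sq (norm_nonneg x)]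
end
end

section
/- Let r > 0 and let f ∈ C^∞_ev([0,r]). Then the function ρ ↦ ρ^{-1} f'(ρ), defined for ρ ∈ (0,r], extends to a function Df ∈ C^∞_ev([0,r]); that is, the operation D maps C^∞_ev([0,r]) into itself. -/
open MeasureTheory Metric Set

noncomputable section

namespace DAux

open Filter intervalIntegral

/-- iterated derivatives of `f` on `[0,r]` -/
def F (r : ℝ) (f : ℝ → ℂ) (j : ℕ) : ℝ → ℂ := iteratedDerivWithin j f (Icc 0 r)

/-- `Phi k ρ = ∫_0^ρ t^k f^{(k+2)}(t) dt` -/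
def Phi (r : ℝ) (f : ℝ → ℂ) (k : ℕ) (ρ : ℝ) : ℂ :=
  ∫ t in (0:ℝ)..ρ, (t:ℂ) ^ k * F r f (k+2) t

/-- The `k`-th derivative of `Df`, defined explicitly. -/
def G (r : ℝ) (f : ℝ → ℂ) (k : ℕ) (ρ : ℝ) : ℂ :=
  if ρ = 0 then F r f (k+2) 0 / ((k:ℂ)+1) else ((ρ:ℂ) ^ (k+1))⁻¹ * Phi r f k ρ

variable {r : ℝ} {f : ℝ → ℂ}

lemma udo (hr : 0 < r) : UniqueDiffOn ℝ (Icc (0:ℝ) r) := uniqueDiffOn_Icc hr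

lemma contF (hr : 0 < r) (hf : ContDiffOn ℝ (⊤ : ℕ∞) f (Icc 0 r)) (j : ℕ) :
    ContinuousOn (F r f j) (Icc 0 r) := by
  refine hf.continuousOn_iteratedDerivWithin ?_ (udo hr)
  exact_mod_cast le_top

lemma derivF (hr : 0 < r) (hf : ContDiffOn ℝ (⊤ : ℕ∞) f (Icc 0 r)) (j : ℕ)
    {t : ℝ} (ht : t ∈ Ioo (0:ℝ) r) : HasDerivAt (F r f j) (F r f (j+1) t) t := by
  have hdiff : DifferentiableWithinAt ℝ (F r f j) (Icc 0 r) t := by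
    refine hf.differentiableOn_iteratedDerivWithin ?_ (udo hr) t (Ioo_subset_Icc_self ht)
    exact_mod_cast lt_top_iff_ne_top.2 (by simp)
  have h1 : HasDerivAt (F r f j) (derivWithin (F r f j) (Icc 0 r) t) t :=
    hdiff.hasDerivWithinAt.hasDerivAt (Icc_mem_nhds ht.1 ht.2)
  have h2 : F r f (j+1) t = derivWithin (F r f j) (Icc 0 r) t :=
    congrFun iteratedDerivWithin_succ t
  rw [h2]; exact h1

lemma contIntegrand (hr : 0 < r) (hf : ContDiffOn ℝ (⊤ : ℕ∞) f (Icc 0 r)) (k j : ℕ) :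
    ContinuousOn (fun t : ℝ => (t:ℂ) ^ k * F r f j t) (Icc 0 r) :=
  (Complex.continuous_ofReal.pow k).continuousOn.mul (contF hr hf j)

lemma intF (hr : 0 < r) (hf : ContDiffOn ℝ (⊤ : ℕ∞) f (Icc 0 r)) (k j : ℕ)
    {ρ : ℝ} (h0 : 0 ≤ ρ) (hρ : ρ ≤ r) :
    IntervalIntegrable (fun t : ℝ => (t:ℂ) ^ k * F r f j t) volume 0 ρ := by
  apply ContinuousOn.intervalIntegrable
  apply (contIntegrand hr hf k j).mono
  rw [uIcc_of_le h0]
  exact Icc_subset_Icc le_rfl hρ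

lemma ftc1 (hr : 0 < r) (hf : ContDiffOn ℝ (⊤ : ℕ∞) f (Icc 0 r)) (k : ℕ)
    {ρ : ℝ} (hρ : ρ ∈ Ioo (0:ℝ) r) :
    HasDerivAt (Phi r f k) ((ρ:ℂ) ^ k * F r f (k+2) ρ) ρ := by
  apply intervalIntegral.integral_hasDerivAt_right
    (intF hr hf k (k+2) hρ.1.le hρ.2.le)
  · exact ContinuousOn.stronglyMeasurableAtFilter isOpen_Ioo
      ((contIntegrand hr hf k (k+2)).mono Ioo_subset_Icc_self) ρ hρ
  · exact ((contIntegrand hr hf k (k+2)).continuousAt (Icc_mem_nhds hρ.1 hρ.2))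

lemma contPhi (hr : 0 < r) (hf : ContDiffOn ℝ (⊤ : ℕ∞) f (Icc 0 r)) (k : ℕ) :
    ContinuousOn (Phi r f k) (Icc 0 r) := by
  have h := intervalIntegral.continuousOn_primitive_interval
    (a := (0:ℝ)) (b := r) (μ := volume)
    (f := fun t : ℝ => (t:ℂ) ^ k * F r f (k+2) t) ?_
  · rwa [uIcc_of_le hr.le] at h
  · rw [uIcc_of_le hr.le]
    exact (contIntegrand hr hf k (k+2)).integrableOn_Icc

lemma intPow (k : ℕ) (ρ : ℝ) :
    (∫ t in (0:ℝ)..ρ, (t:ℂ) ^ k) = (ρ:ℂ) ^ (k+1) / ((k:ℂ)+1) := by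
  have : (∫ t in (0:ℝ)..ρ, (t:ℂ) ^ k) = ∫ t in (0:ℝ)..ρ, ((t ^ k : ℝ) : ℂ) := by
    simp
  rw [this, intervalIntegral.integral_ofReal, integral_pow]
  push_cast
  ring

/-- integration by parts recursion -/
lemma ibp (hr : 0 < r) (hf : ContDiffOn ℝ (⊤ : ℕ∞) f (Icc 0 r)) (k : ℕ)
    {ρ : ℝ} (hρ : ρ ∈ Ioc (0:ℝ) r) :
    Phi r f (k+1) ρ = (ρ:ℂ) ^ (k+1) * F r f (k+2) ρ - ((k:ℂ)+1) * Phi r f k ρ := by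
  have key : (∫ t in (0:ℝ)..ρ, (((k:ℂ)+1) * ((t:ℂ) ^ k * F r f (k+2) t)
        + (t:ℂ) ^ (k+1) * F r f (k+3) t))
      = (ρ:ℂ) ^ (k+1) * F r f (k+2) ρ - (0:ℂ) ^ (k+1) * F r f (k+2) 0 := by
    apply intervalIntegral.integral_eq_sub_of_hasDeriv_right_of_le hρ.1.le
    · apply ContinuousOn.mono _ (Icc_subset_Icc le_rfl hρ.2)
      exact (contIntegrand hr hf (k+1) (k+2))
    · intro x hx
      have hx' : x ∈ Ioo (0:ℝ) r := ⟨hx.1, lt_of_lt_of_le hx.2 hρ.2⟩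
      have h1 : HasDerivAt (fun t : ℝ => (t:ℂ) ^ (k+1))
          (((k:ℂ)+1) * (x:ℂ) ^ k) x := by
        have := (hasDerivAt_pow (k+1) ((x:ℝ):ℂ)).comp_ofReal
        simpa using this
      have h2 := h1.mul (derivF hr hf (k+2) hx')
      have : ((k:ℂ)+1) * ((x:ℂ) ^ k * F r f (k+2) x) + (x:ℂ) ^ (k+1) * F r f (k+3) x
          = ((k:ℂ)+1) * (x:ℂ) ^ k * F r f (k+2) x + (x:ℂ) ^ (k+1) * F r f (k+3) x := by
        ring
      rw [this]
      exact h2.hasDerivWithinAt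
    · apply IntervalIntegrable.add
      · exact ((intF hr hf k (k+2) hρ.1.le hρ.2).const_mul _)
      · exact intF hr hf (k+1) (k+3) hρ.1.le hρ.2
  rw [intervalIntegral.integral_add (((intF hr hf k (k+2) hρ.1.le hρ.2).const_mul _))
      (intF hr hf (k+1) (k+3) hρ.1.le hρ.2),
    intervalIntegral.integral_const_mul] at key
  have h0 : ((0:ℂ)) ^ (k+1) = 0 := by simp
  rw [h0, zero_mul, sub_zero] at key
  have : Phi r f (k+1) ρ = (∫ t in (0:ℝ)..ρ, (t:ℂ) ^ (k+1) * F r f ((k+1)+2) t) := rfl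
  rw [this]
  have h3 : (k+1)+2 = k+3 := by ring
  rw [h3]
  have h4 : Phi r f k ρ = (∫ t in (0:ℝ)..ρ, (t:ℂ) ^ k * F r f (k+2) t) := rfl
  rw [h4]
  linear_combination key

/-- the limit of the formula at `0⁺`. -/
lemma limG (hr : 0 < r) (hf : ContDiffOn ℝ (⊤ : ℕ∞) f (Icc 0 r)) (k : ℕ) :
    Tendsto (fun ρ : ℝ => ((ρ:ℂ) ^ (k+1))⁻¹ * Phi r f k ρ) (nhdsWithin 0 (Ioi 0))
      (nhds (F r f (k+2) 0 / ((k:ℂ)+1))) := by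
  rw [Metric.tendsto_nhdsWithin_nhds]
  intro ε hε
  have hc : ContinuousWithinAt (F r f (k+2)) (Icc 0 r) 0 :=
    (contF hr hf (k+2)) 0 (left_mem_Icc.2 hr.le)
  rw [Metric.continuousWithinAt_iff] at hc
  obtain ⟨δ₀, hδ₀, hδ⟩ := hc (ε/2) (half_pos hε)
  refine ⟨min δ₀ r, lt_min hδ₀ hr, ?_⟩
  intro ρ hρ hd
  have hρ0 : (0:ℝ) < ρ := hρ
  have hρd : ρ < min δ₀ r := by
    rwa [Real.dist_eq, sub_zero, abs_of_pos hρ0] at hd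
  have hρr : ρ ≤ r := le_of_lt (lt_of_lt_of_le hρd (min_le_right _ _))
  have hρδ : ρ < δ₀ := lt_of_lt_of_le hρd (min_le_left _ _)
  set c : ℂ := F r f (k+2) 0 / ((k:ℂ)+1) with hc_def
  have hk1 : ((k:ℂ)+1) ≠ 0 := by
    have : ((k+1 : ℕ) : ℂ) ≠ 0 := Nat.cast_ne_zero.2 (Nat.succ_ne_zero k)
    push_cast at this
    exact this
  have hkc : ((k:ℂ)+1) * c = F r f (k+2) 0 := by
    rw [hc_def]; field_simp
  -- the key difference
  have hsub : Phi r f k ρ - (ρ:ℂ) ^ (k+1) * c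
      = ∫ t in (0:ℝ)..ρ, (t:ℂ) ^ k * (F r f (k+2) t - F r f (k+2) 0) := by
    have h1 : (∫ t in (0:ℝ)..ρ, (t:ℂ) ^ k * (F r f (k+2) t - F r f (k+2) 0))
        = (∫ t in (0:ℝ)..ρ, (t:ℂ) ^ k * F r f (k+2) t)
          - ∫ t in (0:ℝ)..ρ, (t:ℂ) ^ k * F r f (k+2) 0 := by
      rw [← intervalIntegral.integral_sub (intF hr hf k (k+2) hρ0.le hρr) ?_]
      · congr 1; funext t; ring
      · apply IntervalIntegrable.mul_const
        apply ContinuousOn.intervalIntegrable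
        exact (Complex.continuous_ofReal.pow k).continuousOn
    have h2 : (∫ t in (0:ℝ)..ρ, (t:ℂ) ^ k * F r f (k+2) 0)
        = (ρ:ℂ) ^ (k+1) * c := by
      rw [intervalIntegral.integral_mul_const, intPow k ρ]
      rw [hc_def]
      field_simp
    rw [h1, h2]; rfl
  have hbound : ‖Phi r f k ρ - (ρ:ℂ) ^ (k+1) * c‖ ≤ ρ ^ k * (ε/2) * |ρ - 0| := by
    rw [hsub]
    apply intervalIntegral.norm_integral_le_of_norm_le_const
    intro t ht
    rw [uIoc_of_le hρ0.le] at ht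
    have ht0 : 0 < t := ht.1
    have htρ : t ≤ ρ := ht.2
    rw [norm_mul, norm_pow, Complex.norm_real, Real.norm_eq_abs, abs_of_pos ht0]
    have h1 : t ^ k ≤ ρ ^ k := pow_le_pow_left₀ ht0.le htρ k
    have hdist : dist t 0 < δ₀ := by
      rw [Real.dist_eq, sub_zero, abs_of_pos ht0]
      exact lt_of_le_of_lt htρ hρδ
    have h2 : ‖F r f (k+2) t - F r f (k+2) 0‖ ≤ ε/2 := by
      have := hδ (⟨ht0.le, le_trans htρ hρr⟩ : t ∈ Icc 0 r) hdist
      rw [dist_eq_norm] at this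
      exact this.le
    exact mul_le_mul h1 h2 (norm_nonneg _) (pow_nonneg hρ0.le k)
  have hρne : (ρ:ℂ) ≠ 0 := by exact_mod_cast hρ0.ne'
  have hfact : ((ρ:ℂ) ^ (k+1))⁻¹ * Phi r f k ρ - c
      = ((ρ:ℂ) ^ (k+1))⁻¹ * (Phi r f k ρ - (ρ:ℂ) ^ (k+1) * c) := by
    field_simp
  rw [dist_eq_norm, hfact, norm_mul, norm_inv, norm_pow, Complex.norm_real,
    Real.norm_eq_abs, abs_of_pos hρ0]
  have hle : (ρ ^ (k+1))⁻¹ * ‖Phi r f k ρ - (ρ:ℂ) ^ (k+1) * c‖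
      ≤ (ρ ^ (k+1))⁻¹ * (ρ ^ k * (ε/2) * |ρ - 0|) := by
    apply mul_le_mul_of_nonneg_left hbound
    positivity
  have heq2 : (ρ ^ (k+1))⁻¹ * (ρ ^ k * (ε/2) * |ρ - 0|) = ε/2 := by
    rw [sub_zero, abs_of_pos hρ0]
    field_simp
    ring
  rw [heq2] at hle
  exact lt_of_le_of_lt hle (half_lt_self hε)

lemma G_eq_of_ne (k : ℕ) {ρ : ℝ} (hρ : ρ ≠ 0) :
    G r f k ρ = ((ρ:ℂ) ^ (k+1))⁻¹ * Phi r f k ρ := if_neg hρ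

lemma G_zero (k : ℕ) : G r f k 0 = F r f (k+2) 0 / ((k:ℂ)+1) := if_pos rfl

/-- interior derivative of `G k` is `G (k+1)`. -/
lemma hasDerivAtG (hr : 0 < r) (hf : ContDiffOn ℝ (⊤ : ℕ∞) f (Icc 0 r)) (k : ℕ)
    {ρ : ℝ} (hρ : ρ ∈ Ioo (0:ℝ) r) :
    HasDerivAt (G r f k) (G r f (k+1) ρ) ρ := by
  have hρ0 : (0:ℝ) < ρ := hρ.1
  have hρne : (ρ:ℂ) ≠ 0 := by exact_mod_cast hρ0.ne'
  have hpne : (ρ:ℂ) ^ (k+1) ≠ 0 := pow_ne_zero _ hρne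
  -- derivative of the inverse-power factor
  have ha : HasDerivAt (fun x : ℝ => ((x:ℂ) ^ (k+1))⁻¹)
      (-(((k:ℂ)+1) * (ρ:ℂ) ^ k) / ((ρ:ℂ) ^ (k+1)) ^ 2) ρ := by
    have h1 : HasDerivAt (fun z : ℂ => (z ^ (k+1))⁻¹)
        (-(((k:ℂ)+1) * (ρ:ℂ) ^ k) / ((ρ:ℂ) ^ (k+1)) ^ 2) ((ρ:ℝ):ℂ) := by
      have := (hasDerivAt_pow (k+1) ((ρ:ℝ):ℂ)).inv hpne
      simp at this; exact this
    exact h1.comp_ofReal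
  have hb := ftc1 hr hf k hρ
  have hmul := ha.mul hb
  have heq : G r f k =ᶠ[nhds ρ] fun x : ℝ => ((x:ℂ) ^ (k+1))⁻¹ * Phi r f k x := by
    filter_upwards [Ioo_mem_nhds hρ0 hρ.2] with x hx
    exact G_eq_of_ne k (ne_of_gt hx.1)
  rw [heq.hasDerivAt_iff]
  have hval : -(((k:ℂ)+1) * (ρ:ℂ) ^ k) / ((ρ:ℂ) ^ (k+1)) ^ 2 * Phi r f k ρ
      + ((ρ:ℂ) ^ (k+1))⁻¹ * ((ρ:ℂ) ^ k * F r f (k+2) ρ)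
      = G r f (k+1) ρ := by
    rw [G_eq_of_ne (k+1) hρ0.ne', ibp hr hf k ⟨hρ0, hρ.2.le⟩]
    push_cast
    field_simp
    ring
  rw [← hval]
  exact hmul

lemma contGr (hr : 0 < r) (hf : ContDiffOn ℝ (⊤ : ℕ∞) f (Icc 0 r)) (k : ℕ) :
    ContinuousWithinAt (G r f k) (Ioo (0:ℝ) r) r := by
  have hform : ContinuousWithinAt (fun x : ℝ => ((x:ℂ) ^ (k+1))⁻¹ * Phi r f k x)
      (Ioo (0:ℝ) r) r := by
    apply ContinuousWithinAt.mul
    · apply ContinuousAt.continuousWithinAt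
      exact ((Complex.continuous_ofReal.pow (k+1)).continuousAt).inv₀
        (pow_ne_zero _ (by exact_mod_cast hr.ne'))
    · exact ((contPhi hr hf k) r (right_mem_Icc.2 hr.le)).mono Ioo_subset_Icc_self
  apply hform.congr
  · intro x hx; exact G_eq_of_ne k (ne_of_gt hx.1)
  · exact G_eq_of_ne k hr.ne'

lemma contG0 (hr : 0 < r) (hf : ContDiffOn ℝ (⊤ : ℕ∞) f (Icc 0 r)) (k : ℕ) :
    ContinuousWithinAt (G r f k) (Ioo (0:ℝ) r) 0 := by
  have h1 : Tendsto (G r f k) (nhdsWithin 0 (Ioo (0:ℝ) r)) (nhds (G r f k 0)) := by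
    rw [G_zero]
    apply Tendsto.congr' _ ((limG hr hf k).mono_left (nhdsWithin_mono _ Ioo_subset_Ioi_self))
    filter_upwards [self_mem_nhdsWithin] with x hx
    exact (G_eq_of_ne k (ne_of_gt hx.1)).symm
  exact h1

/-- `G k` has derivative `G (k+1)` within `[0,r]` everywhere. -/
lemma hasDerivWithinG (hr : 0 < r) (hf : ContDiffOn ℝ (⊤ : ℕ∞) f (Icc 0 r)) (k : ℕ)
    {x : ℝ} (hx : x ∈ Icc (0:ℝ) r) :
    HasDerivWithinAt (G r f k) (G r f (k+1) x) (Icc 0 r) x := by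
  rcases eq_or_lt_of_le hx.1 with h0 | h0
  · -- x = 0
    subst h0
    have hdiff : DifferentiableOn ℝ (G r f k) (Ioo (0:ℝ) r) := fun ρ hρ =>
      (hasDerivAtG hr hf k hρ).differentiableAt.differentiableWithinAt
    have hmem : Ioo (0:ℝ) r ∈ nhdsWithin (0:ℝ) (Ioi 0) :=
      Ioo_mem_nhdsGT_of_mem ⟨le_rfl, hr⟩
    have htend : Tendsto (fun x => deriv (G r f k) x) (nhdsWithin (0:ℝ) (Ioi 0))
        (nhds (G r f (k+1) 0)) := by
      have h1 : Tendsto (G r f (k+1)) (nhdsWithin (0:ℝ) (Ioi 0))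
          (nhds (G r f (k+1) 0)) := by
        rw [G_zero]
        apply Tendsto.congr' _ (limG hr hf (k+1))
        filter_upwards [self_mem_nhdsWithin] with x hx
        exact (G_eq_of_ne (k+1) (ne_of_gt hx)).symm
      apply h1.congr'
      filter_upwards [hmem] with x hx
      exact ((hasDerivAtG hr hf k hx).deriv).symm
    have := hasDerivWithinAt_Ici_of_tendsto_deriv hdiff (contG0 hr hf k) hmem htend
    exact this.mono Icc_subset_Ici_self
  rcases eq_or_lt_of_le hx.2 with hr' | hr'
  · -- x = r
    subst hr'
    have hdiff : DifferentiableOn ℝ (G x f k) (Ioo (0:ℝ) x) := fun ρ hρ =>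
      (hasDerivAtG hr hf k hρ).differentiableAt.differentiableWithinAt
    have hmem : Ioo (0:ℝ) x ∈ nhdsWithin x (Iio x) :=
      Ioo_mem_nhdsLT_of_mem ⟨h0, le_rfl⟩
    have htend : Tendsto (fun y => deriv (G x f k) y) (nhdsWithin x (Iio x))
        (nhds (G x f (k+1) x)) := by
      rw [← nhdsWithin_Ioo_eq_nhdsLT h0]
      apply Tendsto.congr' _ (contGr hr hf (k+1))
      filter_upwards [self_mem_nhdsWithin] with y hy
      exact ((hasDerivAtG hr hf k hy).deriv).symm
    have := hasDerivWithinAt_Iic_of_tendsto_deriv hdiff (contGr hr hf k) hmem htend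
    exact this.mono Icc_subset_Iic_self
  · -- interior
    exact (hasDerivAtG hr hf k ⟨h0, hr'⟩).hasDerivWithinAt

open scoped ContDiff in
lemma contDiffG (hr : 0 < r) (hf : ContDiffOn ℝ (⊤ : ℕ∞) f (Icc 0 r)) :
    ∀ (n : ℕ) (k : ℕ), ContDiffOn ℝ n (G r f k) (Icc 0 r) := by
  intro n
  induction n with
  | zero =>
    intro k
    rw [show ((0:ℕ) : WithTop ℕ∞) = 0 from rfl, contDiffOn_zero]
    exact fun x hx => (hasDerivWithinG hr hf k hx).continuousWithinAt
  | succ n ih =>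
    intro k
    have hcast : ((n+1:ℕ) : WithTop ℕ∞) = (n : WithTop ℕ∞) + 1 := by push_cast; ring
    rw [hcast, contDiffOn_succ_iff_derivWithin (udo hr)]
    refine ⟨fun x hx => (hasDerivWithinG hr hf k hx).differentiableWithinAt, ?_, ?_⟩
    · intro h
      exact absurd h (by exact_mod_cast WithTop.natCast_ne_top n)
    · apply (ih (k+1)).congr
      intro x hx
      exact ((hasDerivWithinG hr hf k hx).derivWithin ((udo hr) x hx))

lemma contDiffTopG (hr : 0 < r) (hf : ContDiffOn ℝ (⊤ : ℕ∞) f (Icc 0 r)) (k : ℕ) :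
    ContDiffOn ℝ (⊤ : ℕ∞) (G r f k) (Icc 0 r) := by
  rw [contDiffOn_infty]
  exact fun n => contDiffG hr hf n k

lemma iterG (hr : 0 < r) (hf : ContDiffOn ℝ (⊤ : ℕ∞) f (Icc 0 r)) :
    ∀ (m : ℕ), ∀ x ∈ Icc (0:ℝ) r,
      iteratedDerivWithin m (G r f 0) (Icc 0 r) x = G r f m x := by
  intro m
  induction m with
  | zero => intro x hx; rw [iteratedDerivWithin_zero]
  | succ m ih =>
    intro x hx
    rw [iteratedDerivWithin_succ]
    rw [derivWithin_congr (fun y hy => ih y hy) (ih x hx)]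
    exact (hasDerivWithinG hr hf m hx).derivWithin ((udo hr) x hx)

end DAux

/-- for `f ∈ C^∞_ev([0,r])`, the function `ρ ↦ ρ⁻¹ f'(ρ)` on `(0,r]`
extends to a function `Df ∈ C^∞_ev([0,r])`. -/
theorem D_maps_smoothEven_to_smoothEven (r : ℝ) (hr : 0 < r) (f : ℝ → ℂ)
    (hf : SmoothEvenOn r f) :
    ∃ Df : ℝ → ℂ, SmoothEvenOn r Df ∧
      ∀ ρ ∈ Ioc (0 : ℝ) r, Df ρ = ρ⁻¹ * derivWithin f (Icc 0 r) ρ := by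
  obtain ⟨hf1, hf2⟩ := hf
  refine ⟨DAux.G r f 0, ⟨DAux.contDiffTopG hr hf1 0, ?_⟩, ?_⟩
  · intro n
    rw [DAux.iterG hr hf1 (2*n+1) 0 (Set.left_mem_Icc.2 hr.le), DAux.G_zero]
    have h3 : DAux.F r f (2*n+1+2) 0 = 0 := by
      have h := hf2 (n+1)
      have he : 2*(n+1)+1 = 2*n+1+2 := by ring
      rw [he] at h
      exact h
    rw [h3, zero_div]
  · intro ρ hρ
    rw [DAux.G_eq_of_ne 0 (ne_of_gt hρ.1)]
    have hint2 : IntervalIntegrable (DAux.F r f 2) volume 0 ρ := by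
      apply ContinuousOn.intervalIntegrable
      apply (DAux.contF hr hf1 2).mono
      rw [uIcc_of_le hρ.1.le]
      exact Icc_subset_Icc le_rfl hρ.2
    have key : (∫ t in (0:ℝ)..ρ, DAux.F r f 2 t) = DAux.F r f 1 ρ - DAux.F r f 1 0 := by
      apply intervalIntegral.integral_eq_sub_of_hasDeriv_right_of_le hρ.1.le
      · exact (DAux.contF hr hf1 1).mono (Icc_subset_Icc le_rfl hρ.2)
      · intro t ht
        exact (DAux.derivF hr hf1 1 ⟨ht.1, lt_of_lt_of_le ht.2 hρ.2⟩).hasDerivWithinAt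
      · exact hint2
    have hzero : DAux.F r f 1 0 = 0 := by
      have h := hf2 0
      simpa [DAux.F] using h
    have hPhi : DAux.Phi r f 0 ρ = DAux.F r f 1 ρ := by
      have h4 : DAux.Phi r f 0 ρ = ∫ t in (0:ℝ)..ρ, DAux.F r f 2 t := by
        unfold DAux.Phi
        congr 1
        funext t
        simp [DAux.F]
      rw [h4, key, hzero, sub_zero]
    rw [hPhi]
    have h1 : DAux.F r f 1 ρ = derivWithin f (Icc 0 r) ρ :=
      congrFun iteratedDerivWithin_one ρ
    rw [h1, pow_one, Complex.ofReal_inv]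
end
end
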